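/- arXiv:2603.17059 — 5 statements merged into one kernel-verified Lean document; each statement's English description precedes it below -/
import Mathlib

section
/- Let T be a bounded linear operator on a complex Hilbert space H that admits an A-adjoint (where A is a positive operator with dim R(A) ≥ 2), suppose T is A-self-adjoint (i.e., AT is self-adjoint), and let q be a complex number with |q| ≤ 1. Then |q|·w_A(T) ≤ w_{q,A}(T) ≤ w_A(T), where w_{q,A}(T) = sup{|⟨Tx,y⟩_A| : ‖x‖_A = ‖y‖_A = 1, ⟨x,y⟩_A = q} and w_A(T) = w_{1,A}(T). -/
open scoped InnerProductSpace

variable {H : Type*} [NormedAddCommGroup H] [InnerProductSpace ℂ H] [CompleteSpace H]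

/-- The semi-inner product induced by `A`: `⟨x,y⟩_A = ⟨Ax,y⟩`
(linear in the first argument, as in the paper). -/
noncomputable def sip (A : H →L[ℂ] H) (x y : H) : ℂ := @inner ℂ H _ y (A x)

/-- The seminorm induced by `A`. -/
noncomputable def normA (A : H →L[ℂ] H) (x : H) : ℝ := Real.sqrt (sip A x x).re

/-- The `A`-`q`-numerical radius of `T`. -/
noncomputable def wqA (A T : H →L[ℂ] H) (q : ℂ) : ℝ :=
  sSup {r : ℝ | ∃ x y : H, normA A x = 1 ∧ normA A y = 1 ∧ sip A x y = q ∧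
    r = ‖sip A (T x) y‖}

/-- The `A`-operator seminorm of `T`. -/
noncomputable def opNormA (A T : H →L[ℂ] H) : ℝ :=
  sSup {r : ℝ | ∃ x ∈ closure (Set.range fun v => A v), x ≠ 0 ∧ r = normA A (T x) / normA A x}


set_option linter.unusedSectionVars false
set_option linter.unusedVariables false
set_option linter.deprecated false

section basic

variable (A T : H →L[ℂ] H)

lemma sip_add_left (x x' y : H) : sip A (x + x') y = sip A x y + sip A x' y := by
  simp [sip, inner_add_right]

lemma sip_add_right (x y y' : H) : sip A x (y + y') = sip A x y + sip A x y' := by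
  simp [sip, inner_add_left]

lemma sip_smul_left (c : ℂ) (x y : H) : sip A (c • x) y = c * sip A x y := by
  simp [sip, inner_smul_right]

lemma sip_smul_right (c : ℂ) (x y : H) : sip A x (c • y) = (starRingEnd ℂ) c * sip A x y := by
  simp [sip, inner_smul_left]
  ring

lemma sip_real_smul_left (r : ℝ) (x y : H) :
    sip A (r • x) y = (r : ℂ) * sip A x y := by
  rw [← Complex.coe_smul, sip_smul_left]

lemma sip_real_smul_right (r : ℝ) (x y : H) :
    sip A x (r • y) = (r : ℂ) * sip A x y := by
  rw [← Complex.coe_smul, sip_smul_right, Complex.conj_ofReal]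

lemma sip_sub_left (x x' y : H) : sip A (x - x') y = sip A x y - sip A x' y := by
  simp [sip, map_sub, inner_sub_right]

lemma sip_sub_right (x y y' : H) : sip A x (y - y') = sip A x y - sip A x y' := by
  simp [sip, inner_sub_left]

lemma sip_conj (hA : A.IsPositive) (x y : H) :
    sip A y x = (starRingEnd ℂ) (sip A x y) := by
  have hAA : ContinuousLinearMap.adjoint A = A :=
    ContinuousLinearMap.isSelfAdjoint_iff'.mp hA.isSelfAdjoint
  calc sip A y x = ⟪x, A y⟫_ℂ := rfl
    _ = ⟪ContinuousLinearMap.adjoint A x, y⟫_ℂ :=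
        (ContinuousLinearMap.adjoint_inner_left A y x).symm
    _ = ⟪A x, y⟫_ℂ := by rw [hAA]
    _ = (starRingEnd ℂ) ⟪y, A x⟫_ℂ := (inner_conj_symm _ _).symm

lemma sip_re_nonneg (hA : A.IsPositive) (x : H) : 0 ≤ (sip A x x).re := by
  have := hA.2 x
  rw [ContinuousLinearMap.reApplyInnerSelf] at this
  simpa [sip, inner_re_symm] using this

lemma normA_nonneg (x : H) : 0 ≤ normA A x := Real.sqrt_nonneg _

lemma normA_sq (hA : A.IsPositive) (x : H) : (normA A x) ^ 2 = (sip A x x).re := by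
  rw [normA, Real.sq_sqrt (sip_re_nonneg A hA x)]

lemma sip_self_eq_sq (hA : A.IsPositive) (x : H) :
    sip A x x = ((normA A x) ^ 2 : ℝ) := by
  have him : (sip A x x).im = 0 := by
    have h := sip_conj A hA x x
    have := congrArg Complex.im h
    simp at this
    linarith
  rw [normA_sq A hA]
  exact Complex.ext (by simp) (by simp [him])

lemma normA_smul (hA : A.IsPositive) (c : ℂ) (x : H) :
    normA A (c • x) = ‖c‖ * normA A x := by
  unfold normA
  rw [sip_smul_left, sip_smul_right]
  have : c * ((starRingEnd ℂ) c * sip A x x) = ((‖c‖ ^ 2 : ℝ) : ℂ) * sip A x x := by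
    rw [Complex.sq_norm]; push_cast [← Complex.mul_conj]; ring
  rw [this]
  rw [Complex.re_ofReal_mul]
  rw [Real.sqrt_mul (by positivity)]
  simp [Real.sqrt_sq_eq_abs]

end basic

section cs
variable (A T : H →L[ℂ] H)

lemma sip_cs (hA : A.IsPositive) (x y : H) :
    ‖sip A x y‖ ≤ normA A x * normA A y := by
  set p := sip A x y with hp
  set a := normA A x
  set b := normA A y
  have ha : 0 ≤ a := normA_nonneg A x
  have hb : 0 ≤ b := normA_nonneg A y
  by_cases hp0 : p = 0
  · rw [hp0]; simpa using mul_nonneg ha hb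
  set N := Complex.normSq p with hNdef
  have hN : 0 < N := by
    simpa [hNdef, Complex.normSq_pos] using hp0
  have key : ∀ t : ℝ, 0 ≤ a ^ 2 + 2 * t * N + t ^ 2 * N * b ^ 2 := by
    intro t
    have h0 := sip_re_nonneg A hA (x + ((t : ℂ) * p) • y)
    have hexp : sip A (x + ((t : ℂ) * p) • y) (x + ((t : ℂ) * p) • y)
        = ((a ^ 2 + 2 * t * N + t ^ 2 * N * b ^ 2 : ℝ) : ℂ) := by
      rw [sip_add_left, sip_add_right, sip_add_right, sip_smul_left, sip_smul_right,
        sip_smul_right, sip_smul_left, sip_conj A hA x y, ← hp,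
        sip_self_eq_sq A hA x, sip_self_eq_sq A hA y]
      have h1 : p * (starRingEnd ℂ) p = ((N : ℝ) : ℂ) := Complex.mul_conj p
      simp only [map_mul, Complex.conj_conj, Complex.conj_ofReal]
      push_cast
      linear_combination (2 * (t : ℂ) + (t : ℂ) ^ 2 * (b : ℂ) ^ 2) * h1
    rw [hexp, Complex.ofReal_re] at h0
    exact h0
  have habs : ‖p‖ ^ 2 = N := Complex.sq_norm p
  have hsq : N ≤ a ^ 2 * b ^ 2 := by
    by_cases hb0 : b = 0
    · exfalso
      have hk := key (-(a ^ 2 + 1) / (2 * N))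
      rw [hb0] at hk
      have heq : a ^ 2 + 2 * (-(a ^ 2 + 1) / (2 * N)) * N
          + (-(a ^ 2 + 1) / (2 * N)) ^ 2 * N * (0 : ℝ) ^ 2 = -1 := by
        field_simp
        ring
      rw [heq] at hk
      linarith
    · have hb2 : 0 < b ^ 2 := by positivity
      have heq : a ^ 2 + 2 * (-(1 / b ^ 2)) * N + (-(1 / b ^ 2)) ^ 2 * N * b ^ 2
          = a ^ 2 - N / b ^ 2 := by field_simp; ring
      have h4 := key (-(1 / b ^ 2))
      rw [heq] at h4
      have h5 : N / b ^ 2 ≤ a ^ 2 := by linarith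
      calc N = N / b ^ 2 * b ^ 2 := by field_simp
        _ ≤ a ^ 2 * b ^ 2 := mul_le_mul_of_nonneg_right h5 (le_of_lt hb2)
  calc ‖p‖ = Real.sqrt N := by
        rw [← habs, Real.sqrt_sq (norm_nonneg p)]
    _ ≤ Real.sqrt (a ^ 2 * b ^ 2) := Real.sqrt_le_sqrt hsq
    _ = a * b := by
        rw [← mul_pow, Real.sqrt_sq (by positivity)]

lemma normA_eq_zero (hA : A.IsPositive) {x : H} (h : normA A x = 0) : A x = 0 := by
  have h1 : ‖sip A x (A x)‖ ≤ 0 := by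
    have := sip_cs A hA x (A x)
    rw [h] at this
    simpa using this
  have h2 : sip A x (A x) = 0 :=
    norm_eq_zero.mp (le_antisymm h1 (norm_nonneg _))
  have : ⟪A x, A x⟫_ℂ = 0 := h2
  simpa using inner_self_eq_zero.mp this

lemma sip_T_left (hA : A.IsPositive) (hsa : IsSelfAdjoint (A ∘L T)) (a b : H) :
    sip A (T a) b = sip A a (T b) := by
  have hAA : ContinuousLinearMap.adjoint A = A :=
    ContinuousLinearMap.isSelfAdjoint_iff'.mp hA.isSelfAdjoint
  have hAT : ContinuousLinearMap.adjoint (A ∘L T) = A ∘L T :=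
    ContinuousLinearMap.isSelfAdjoint_iff'.mp hsa
  calc sip A (T a) b = ⟪b, (A ∘L T) a⟫_ℂ := rfl
    _ = ⟪b, ContinuousLinearMap.adjoint (A ∘L T) a⟫_ℂ := by rw [hAT]
    _ = ⟪(A ∘L T) b, a⟫_ℂ := ContinuousLinearMap.adjoint_inner_right _ _ _
    _ = ⟪ContinuousLinearMap.adjoint A (T b), a⟫_ℂ := by rw [hAA]; rfl
    _ = ⟪T b, A a⟫_ℂ := ContinuousLinearMap.adjoint_inner_left _ _ _
    _ = sip A a (T b) := rfl

lemma sip_pow_left (hA : A.IsPositive) (hsa : IsSelfAdjoint (A ∘L T)) (n : ℕ) (a b : H) :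
    sip A ((T ^ n) a) b = sip A a ((T ^ n) b) := by
  induction n generalizing a b with
  | zero => simp
  | succ n ih =>
    have h1 : (T ^ (n + 1)) a = (T ^ n) (T a) := by
      rw [pow_succ, ContinuousLinearMap.mul_apply]
    have h2 : (T ^ (n + 1)) b = T ((T ^ n) b) := by
      rw [pow_succ', ContinuousLinearMap.mul_apply]
    rw [h1, ih, sip_T_left A T hA hsa, h2]

end cs

lemma le_of_forall_pow_two_le {a b K : ℝ} (hb : 0 ≤ b) (hK : 0 ≤ K)
    (h : ∀ k : ℕ, a ^ (2 ^ k) ≤ K * b ^ (2 ^ k)) : a ≤ b := by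
  by_contra hab
  push_neg at hab
  have ha' : 0 < a := lt_of_le_of_lt hb hab
  rcases eq_or_lt_of_le hb with hb0 | hb0
  · have h1 := h 1
    rw [← hb0] at h1
    simp at h1
    nlinarith
  · have hr : 1 < a / b := (one_lt_div hb0).2 hab
    have hbd : ∀ k : ℕ, (a / b) ^ (2 ^ k) ≤ K := by
      intro k
      rw [div_pow, div_le_iff₀ (by positivity)]
      exact h k
    have h2 : Filter.Tendsto (fun k : ℕ => (a / b) ^ k) Filter.atTop Filter.atTop :=
      tendsto_pow_atTop_atTop_of_one_lt hr
    have h3 : Filter.Tendsto (fun k : ℕ => 2 ^ k) Filter.atTop Filter.atTop :=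
      tendsto_pow_atTop_atTop_of_one_lt one_lt_two
    obtain ⟨k, hk⟩ := ((h2.comp h3).eventually_gt_atTop K).exists
    exact absurd (hbd k) (not_le.2 hk)

lemma normA_T_le (A T : H →L[ℂ] H) (hA : A.IsPositive) (hsa : IsSelfAdjoint (A ∘L T)) (x : H) :
    normA A (T x) ≤ ‖T‖ * normA A x := by
  set g : ℕ → ℝ := fun n => normA A ((T ^ n) x) ^ 2 with hg
  have hgnn : ∀ n, 0 ≤ g n := fun n => sq_nonneg _
  have hgsq : ∀ n, g n ^ 2 ≤ g 0 * g (2 * n) := by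
    intro n
    have h1 : sip A ((T ^ n) x) ((T ^ n) x) = sip A x ((T ^ (2 * n)) x) := by
      rw [sip_pow_left A T hA hsa n]
      congr 1
      rw [← ContinuousLinearMap.mul_apply, ← pow_add, two_mul]
    have h2 : g n ≤ normA A x * normA A ((T ^ (2 * n)) x) := by
      calc g n = (sip A ((T ^ n) x) ((T ^ n) x)).re := normA_sq A hA _
        _ = (sip A x ((T ^ (2 * n)) x)).re := by rw [h1]
        _ ≤ ‖sip A x ((T ^ (2 * n)) x)‖ := Complex.re_le_norm _
        _ ≤ normA A x * normA A ((T ^ (2 * n)) x) := sip_cs A hA _ _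
    have h3 : g n ^ 2 ≤ (normA A x * normA A ((T ^ (2 * n)) x)) ^ 2 :=
      pow_le_pow_left₀ (hgnn n) h2 2
    calc g n ^ 2 ≤ (normA A x * normA A ((T ^ (2 * n)) x)) ^ 2 := h3
      _ = normA A x ^ 2 * normA A ((T ^ (2 * n)) x) ^ 2 := by ring
      _ = g 0 * g (2 * n) := by simp [hg]
  have hg0 : g 0 = normA A x ^ 2 := by simp [hg]
  have hg1 : g 1 = normA A (T x) ^ 2 := by simp [hg]
  by_cases h0 : g 0 = 0
  · -- degenerate
    have := hgsq 1
    rw [h0, zero_mul] at this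
    have hgz : g 1 = 0 := by nlinarith [hgnn 1]
    have hx0 : normA A x = 0 := by
      have := hg0 ▸ h0; exact pow_eq_zero_iff (n := 2) (by norm_num) |>.mp this
    have hTx : normA A (T x) = 0 := by
      have := hg1 ▸ hgz; exact pow_eq_zero_iff (n := 2) (by norm_num) |>.mp this
    rw [hTx, hx0, mul_zero]
  · have hg0pos : 0 < g 0 := lt_of_le_of_ne (hgnn 0) (Ne.symm h0)
    set C := ‖A‖ * ‖x‖ ^ 2 with hC
    have hCnn : 0 ≤ C := by positivity
    set L := ‖T‖ ^ 2 with hL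
    have hLnn : 0 ≤ L := sq_nonneg _
    have hcrude : ∀ n : ℕ, 0 < n → g n ≤ C * L ^ n := by
      intro n hn
      have h1 : g n = (sip A ((T ^ n) x) ((T ^ n) x)).re := normA_sq A hA _
      have h2 : (sip A ((T ^ n) x) ((T ^ n) x)).re
          ≤ ‖(T ^ n) x‖ * ‖A ((T ^ n) x)‖ := by
        calc (sip A ((T ^ n) x) ((T ^ n) x)).re
            ≤ ‖sip A ((T ^ n) x) ((T ^ n) x)‖ := Complex.re_le_norm _
          _ = ‖(⟪(T ^ n) x, A ((T ^ n) x)⟫_ℂ)‖ := rfl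
          _ ≤ ‖(T ^ n) x‖ * ‖A ((T ^ n) x)‖ := norm_inner_le_norm _ _
      have h3 : ‖A ((T ^ n) x)‖ ≤ ‖A‖ * ‖(T ^ n) x‖ := A.le_opNorm _
      have h4 : ‖(T ^ n) x‖ ≤ ‖T‖ ^ n * ‖x‖ := by
        calc ‖(T ^ n) x‖ ≤ ‖T ^ n‖ * ‖x‖ := (T ^ n).le_opNorm x
          _ ≤ ‖T‖ ^ n * ‖x‖ :=
            mul_le_mul_of_nonneg_right (norm_pow_le' T hn) (norm_nonneg x)
      have h5 : ‖(T ^ n) x‖ * ‖A ((T ^ n) x)‖ ≤ ‖A‖ * ‖(T ^ n) x‖ ^ 2 := by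
        nlinarith [norm_nonneg ((T ^ n) x), norm_nonneg (A ((T ^ n) x))]
      have h6 : ‖A‖ * ‖(T ^ n) x‖ ^ 2 ≤ ‖A‖ * (‖T‖ ^ n * ‖x‖) ^ 2 := by
        apply mul_le_mul_of_nonneg_left _ (norm_nonneg A)
        exact pow_le_pow_left₀ (norm_nonneg _) h4 2
      calc g n ≤ ‖(T ^ n) x‖ * ‖A ((T ^ n) x)‖ := h1 ▸ h2
        _ ≤ ‖A‖ * (‖T‖ ^ n * ‖x‖) ^ 2 := le_trans h5 h6
        _ = C * L ^ n := by rw [hC, hL]; ring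
    have hmain : ∀ k : ℕ, g 1 ^ (2 ^ k) * g 0 ≤ g 0 ^ (2 ^ k) * g (2 ^ k) := by
      intro k
      induction k with
      | zero => simp [mul_comm]
      | succ k ih =>
        have hsq2 : (g 1 ^ (2 ^ k) * g 0) ^ 2 ≤ (g 0 ^ (2 ^ k) * g (2 ^ k)) ^ 2 :=
          pow_le_pow_left₀ (by positivity) ih 2
        have h7 := hgsq (2 ^ k)
        have hpow : (2 : ℕ) ^ (k + 1) = 2 ^ k * 2 := by ring
        have e1 : g 1 ^ (2 ^ (k + 1)) * g 0 * g 0 ≤ g 0 ^ (2 ^ (k + 1)) * g (2 ^ (k + 1)) * g 0 := by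
          calc g 1 ^ (2 ^ (k + 1)) * g 0 * g 0
              = (g 1 ^ (2 ^ k) * g 0) ^ 2 := by rw [hpow, pow_mul]; ring
            _ ≤ (g 0 ^ (2 ^ k) * g (2 ^ k)) ^ 2 := hsq2
            _ = g 0 ^ (2 ^ (k + 1)) * g (2 ^ k) ^ 2 := by rw [hpow, pow_mul]; ring
            _ ≤ g 0 ^ (2 ^ (k + 1)) * (g 0 * g (2 * 2 ^ k)) := by
                apply mul_le_mul_of_nonneg_left h7 (by positivity)
            _ = g 0 ^ (2 ^ (k + 1)) * g (2 ^ (k + 1)) * g 0 := by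
                rw [hpow]; ring_nf
        exact le_of_mul_le_mul_right e1 hg0pos
    have hfin : ∀ k : ℕ, g 1 ^ (2 ^ k) ≤ (C / g 0) * (g 0 * L) ^ (2 ^ k) := by
      intro k
      have h8 := hmain k
      have h9 : g 0 ^ (2 ^ k) * g (2 ^ k) ≤ g 0 ^ (2 ^ k) * (C * L ^ (2 ^ k)) :=
        mul_le_mul_of_nonneg_left (hcrude (2 ^ k) (Nat.two_pow_pos k)) (by positivity)
      have h10 : g 1 ^ (2 ^ k) * g 0 ≤ (g 0 * L) ^ (2 ^ k) * C := by
        calc g 1 ^ (2 ^ k) * g 0 ≤ g 0 ^ (2 ^ k) * (C * L ^ (2 ^ k)) := le_trans h8 h9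
          _ = (g 0 * L) ^ (2 ^ k) * C := by rw [mul_pow]; ring
      rw [div_mul_eq_mul_div, ge_iff_le.symm, ge_iff_le, le_div_iff₀ hg0pos]
      linarith [h10]
    have h11 : g 1 ≤ g 0 * L :=
      le_of_forall_pow_two_le (by positivity) (by positivity) hfin
    have h12 : normA A (T x) ^ 2 ≤ (‖T‖ * normA A x) ^ 2 := by
      rw [hg1] at h11
      calc normA A (T x) ^ 2 ≤ g 0 * L := h11
        _ = (‖T‖ * normA A x) ^ 2 := by rw [hg0, hL]; ring
    calc normA A (T x) = Real.sqrt (normA A (T x) ^ 2) :=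
          (Real.sqrt_sq (normA_nonneg A _)).symm
      _ ≤ Real.sqrt ((‖T‖ * normA A x) ^ 2) := Real.sqrt_le_sqrt h12
      _ = ‖T‖ * normA A x := Real.sqrt_sq (mul_nonneg (norm_nonneg T) (normA_nonneg A x))

section rank
variable (A T : H →L[ℂ] H)

lemma exists_not_multiple
    (hrank : 2 ≤ Module.rank ℂ (LinearMap.range (A : H →ₗ[ℂ] H))) (x : H) :
    ∃ v : H, ∀ c : ℂ, A v ≠ c • A x := by
  by_contra hcon
  push_neg at hcon
  have hle : Module.rank ℂ (LinearMap.range (A : H →ₗ[ℂ] H)) ≤ 1 := by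
    rw [rank_le_one_iff]
    refine ⟨⟨A x, LinearMap.mem_range_self _ x⟩, ?_⟩
    rintro ⟨w, hw⟩
    obtain ⟨v, rfl⟩ := hw
    obtain ⟨c, hc⟩ := hcon v
    exact ⟨c, Subtype.ext (by simpa using hc.symm)⟩
  have : (2 : Cardinal) ≤ 1 := le_trans hrank hle
  norm_num at this

lemma exists_unitA (hA : A.IsPositive)
    (hrank : 2 ≤ Module.rank ℂ (LinearMap.range (A : H →ₗ[ℂ] H))) :
    ∃ x : H, normA A x = 1 := by
  obtain ⟨v, hv⟩ := exists_not_multiple A hrank 0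
  have hv0 : A v ≠ 0 := by simpa using hv 0
  have hnv : normA A v ≠ 0 := fun h => hv0 (normA_eq_zero A hA h)
  have hnvpos : 0 < normA A v := lt_of_le_of_ne (normA_nonneg A v) (Ne.symm hnv)
  refine ⟨((normA A v : ℝ) : ℂ)⁻¹ • v, ?_⟩
  rw [normA_smul A hA, norm_inv, Complex.norm_real, Real.norm_eq_abs, abs_of_pos hnvpos]
  field_simp

lemma sip_self_one (hA : A.IsPositive) {x : H} (hx : normA A x = 1) :
    sip A x x = 1 := by
  rw [sip_self_eq_sq A hA, hx]; norm_num

lemma exists_orth (hA : A.IsPositive)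
    (hrank : 2 ≤ Module.rank ℂ (LinearMap.range (A : H →ₗ[ℂ] H)))
    {x : H} (hx : normA A x = 1) :
    ∃ e : H, normA A e = 1 ∧ sip A e x = 0 := by
  obtain ⟨v, hv⟩ := exists_not_multiple A hrank x
  have hxx : sip A x x = 1 := sip_self_one A hA hx
  set w := v - (sip A v x) • x with hw
  have hsw : sip A w x = 0 := by
    rw [hw, sip_sub_left, sip_smul_left, hxx, mul_one, sub_self]
  have hnw : normA A w ≠ 0 := by
    intro h
    have hAw : A w = 0 := normA_eq_zero A hA h
    rw [hw, map_sub, map_smul, sub_eq_zero] at hAw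
    exact hv _ hAw
  have hpos : 0 < normA A w := lt_of_le_of_ne (normA_nonneg A w) (Ne.symm hnw)
  refine ⟨((normA A w : ℝ) : ℂ)⁻¹ • w, ?_, ?_⟩
  · rw [normA_smul A hA, norm_inv, Complex.norm_real, Real.norm_eq_abs, abs_of_pos hpos]
    field_simp
  · rw [sip_smul_left, hsw, mul_zero]

end rank

/-- The defining set of `wqA`. -/
def SS (A T : H →L[ℂ] H) (q : ℂ) : Set ℝ :=
  {r : ℝ | ∃ x y : H, normA A x = 1 ∧ normA A y = 1 ∧ sip A x y = q ∧
    r = ‖sip A (T x) y‖}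

lemma wqA_eq (A T : H →L[ℂ] H) (q : ℂ) : wqA A T q = sSup (SS A T q) := rfl

section sets
variable (A T : H →L[ℂ] H)

lemma SS_bddAbove (hA : A.IsPositive) (hsa : IsSelfAdjoint (A ∘L T)) (q : ℂ) :
    BddAbove (SS A T q) := by
  refine ⟨‖T‖, ?_⟩
  rintro r ⟨x, y, hx, hy, hxy, rfl⟩
  calc ‖sip A (T x) y‖ ≤ normA A (T x) * normA A y := sip_cs A hA _ _
    _ = normA A (T x) := by rw [hy, mul_one]
    _ ≤ ‖T‖ * normA A x := normA_T_le A T hA hsa x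
    _ = ‖T‖ := by rw [hx, mul_one]

lemma build (hA : A.IsPositive) {x e : H} (hx : normA A x = 1) (he : normA A e = 1)
    (hex : sip A e x = 0) (q : ℂ) (hq : ‖q‖ ≤ 1) (σ : ℝ) (hσ : σ ^ 2 = 1) :
    normA A ((starRingEnd ℂ) q • x + ((σ * Real.sqrt (1 - ‖q‖ ^ 2) : ℝ) : ℂ) • e) = 1 ∧
    sip A x ((starRingEnd ℂ) q • x + ((σ * Real.sqrt (1 - ‖q‖ ^ 2) : ℝ) : ℂ) • e) = q ∧
    sip A (T x) ((starRingEnd ℂ) q • x + ((σ * Real.sqrt (1 - ‖q‖ ^ 2) : ℝ) : ℂ) • e)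
      = q * sip A (T x) x
        + ((σ * Real.sqrt (1 - ‖q‖ ^ 2) : ℝ) : ℂ) * sip A (T x) e := by
  have hxe : sip A x e = 0 := by
    rw [sip_conj A hA e x, hex, map_zero]
  have hxx : sip A x x = 1 := sip_self_one A hA hx
  have hee : sip A e e = 1 := sip_self_one A hA he
  set s : ℝ := σ * Real.sqrt (1 - ‖q‖ ^ 2) with hsdef
  have h1q : 0 ≤ 1 - ‖q‖ ^ 2 := by nlinarith [norm_nonneg q]
  have hs2 : s ^ 2 = 1 - ‖q‖ ^ 2 := by
    rw [hsdef, mul_pow, hσ, one_mul, Real.sq_sqrt h1q]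
  refine ⟨?_, ?_, ?_⟩
  · have hyy : sip A ((starRingEnd ℂ) q • x + ((s : ℝ) : ℂ) • e)
        ((starRingEnd ℂ) q • x + ((s : ℝ) : ℂ) • e) = 1 := by
      simp only [sip_add_left, sip_add_right, sip_smul_left, sip_smul_right,
        sip_real_smul_left, sip_real_smul_right,
        hxx, hee, hxe, hex, mul_zero, mul_one, add_zero, zero_add,
        Complex.conj_conj, Complex.conj_ofReal]
      have h1 : (starRingEnd ℂ) q * q = ((‖q‖ ^ 2 : ℝ) : ℂ) := by
        rw [mul_comm, Complex.mul_conj, Complex.sq_norm]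
      have h2 : ((s : ℝ) : ℂ) * ((s : ℝ) : ℂ) = ((1 - ‖q‖ ^ 2 : ℝ) : ℂ) := by
        rw [← Complex.ofReal_mul, ← sq, hs2]
      push_cast at h1 h2 ⊢
      linear_combination h1 + h2
    rw [normA, hyy]
    simp
  · simp [sip_add_right, sip_smul_right, sip_real_smul_right, hxx, hxe,
      Complex.conj_conj, Complex.conj_ofReal]
  · simp [sip_add_right, sip_smul_right, sip_real_smul_right,
      Complex.conj_conj, Complex.conj_ofReal]

lemma sip_quad_le (hA : A.IsPositive) (hsa : IsSelfAdjoint (A ∘L T)) (u : H) :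
    ‖sip A (T u) u‖ ≤ sSup (SS A T 1) * normA A u ^ 2 := by
  by_cases h0 : normA A u = 0
  · have hAu : A u = 0 := normA_eq_zero A hA h0
    have hz : sip A (T u) u = 0 := by
      rw [sip_T_left A T hA hsa]
      show (⟪T u, A u⟫_ℂ) = 0
      rw [hAu, inner_zero_right]
    rw [hz, h0]
    simp
  · have hpos : 0 < normA A u := lt_of_le_of_ne (normA_nonneg A u) (Ne.symm h0)
    set c : ℂ := ((normA A u : ℝ) : ℂ)⁻¹ with hc
    have hcabs : ‖c‖ = (normA A u)⁻¹ := by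
      rw [hc, norm_inv, Complex.norm_real, Real.norm_eq_abs, abs_of_pos hpos]
    have hu' : normA A (c • u) = 1 := by
      rw [normA_smul A hA, hcabs]
      field_simp
    have hmem : ‖sip A (T (c • u)) (c • u)‖ ∈ SS A T 1 :=
      ⟨c • u, c • u, hu', hu', sip_self_one A hA hu', rfl⟩
    have hle := le_csSup (SS_bddAbove A T hA hsa 1) hmem
    have hval : ‖sip A (T (c • u)) (c • u)‖
        = ‖sip A (T u) u‖ * (normA A u)⁻¹ ^ 2 := by
      rw [map_smul, sip_smul_left, sip_smul_right, norm_mul, norm_mul,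
        Complex.norm_conj, hcabs]
      ring
    rw [hval] at hle
    have h2 : ‖sip A (T u) u‖ * (normA A u)⁻¹ ^ 2 * normA A u ^ 2
        ≤ sSup (SS A T 1) * normA A u ^ 2 :=
      mul_le_mul_of_nonneg_right hle (sq_nonneg _)
    calc ‖sip A (T u) u‖
        = ‖sip A (T u) u‖ * (normA A u)⁻¹ ^ 2 * normA A u ^ 2 := by
          field_simp
      _ ≤ sSup (SS A T 1) * normA A u ^ 2 := h2

lemma SS_le (hA : A.IsPositive) (hsa : IsSelfAdjoint (A ∘L T)) {q : ℂ} {r : ℝ}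
    (hr : r ∈ SS A T q) : r ≤ sSup (SS A T 1) := by
  obtain ⟨x, y, hx, hy, hxy, rfl⟩ := hr
  set M := sSup (SS A T 1) with hM
  set p := sip A (T x) y with hp
  set α : ℂ := if h : p = 0 then 1 else (starRingEnd ℂ) p / ((‖p‖ : ℝ) : ℂ) with hα
  have hαabs : ‖α‖ = 1 := by
    rw [hα]
    split_ifs with h
    · simp
    · rw [norm_div, Complex.norm_conj, Complex.norm_real, Real.norm_eq_abs,
        abs_of_pos (by simpa [norm_pos_iff] using h)]
      field_simp [norm_ne_zero_iff.mpr h]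
  have hαp : α * p = ((‖p‖ : ℝ) : ℂ) := by
    rw [hα]
    split_ifs with h
    · simp [h]
    · have hne : ((‖p‖ : ℝ) : ℂ) ≠ 0 := by
        simpa [Complex.ofReal_eq_zero] using norm_ne_zero_iff.mpr h
      field_simp
      rw [mul_comm, Complex.mul_conj, ← Complex.sq_norm]
      push_cast
      ring
  set u := α • x with hu
  set v := y with hv
  have hnu : normA A u = 1 := by rw [hu, normA_smul A hA, hαabs, hx, mul_one]
  have hnv : normA A v = 1 := hy
  have huv1 : sip A (T u) v = ((‖p‖ : ℝ) : ℂ) := by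
    rw [hu, map_smul, sip_smul_left, ← hp, hαp]
  have huv2 : sip A (T v) u = ((‖p‖ : ℝ) : ℂ) := by
    rw [hu, hv, sip_smul_right, sip_T_left A T hA hsa, sip_conj A hA (T x) y, ← hp]
    rw [← map_mul, hαp, Complex.conj_ofReal]
  have hpol : sip A (T (u + v)) (u + v) - sip A (T (u - v)) (u - v)
      = 2 * (sip A (T u) v + sip A (T v) u) := by
    rw [map_add, map_sub, sip_add_left, sip_add_right, sip_add_right,
      sip_sub_left, sip_sub_right, sip_sub_right]
    ring
  have hre : (sip A (T (u + v)) (u + v)).re - (sip A (T (u - v)) (u - v)).re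
      = 4 * ‖p‖ := by
    have h := congrArg Complex.re hpol
    rw [huv1, huv2] at h
    rw [show (2 : ℂ) * (((‖p‖ : ℝ) : ℂ) + ((‖p‖ : ℝ) : ℂ))
        = ((4 * ‖p‖ : ℝ) : ℂ) by push_cast; ring] at h
    rw [Complex.sub_re, Complex.ofReal_re] at h
    exact h
  have hpar : (sip A (u + v) (u + v)).re + (sip A (u - v) (u - v)).re = 4 := by
    have hc : sip A (u + v) (u + v) + sip A (u - v) (u - v)
        = 2 * sip A u u + 2 * sip A v v := by
      rw [sip_add_left, sip_add_right, sip_add_right,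
        sip_sub_left, sip_sub_right, sip_sub_right]
      ring
    have h := congrArg Complex.re hc
    rw [sip_self_one A hA hnu, sip_self_one A hA hnv] at h
    rw [show (2 : ℂ) * 1 + (2 : ℂ) * 1 = ((4 : ℝ) : ℂ) by norm_num] at h
    rw [Complex.add_re, Complex.ofReal_re] at h
    exact h
  have hsum : normA A (u + v) ^ 2 + normA A (u - v) ^ 2 = 4 := by
    rw [normA_sq A hA, normA_sq A hA, hpar]
  have h1 : (sip A (T (u + v)) (u + v)).re ≤ M * normA A (u + v) ^ 2 :=
    le_trans (Complex.re_le_norm _) (sip_quad_le A T hA hsa _)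
  have h2 : -(sip A (T (u - v)) (u - v)).re ≤ M * normA A (u - v) ^ 2 := by
    refine le_trans ?_ (sip_quad_le A T hA hsa _)
    calc -(sip A (T (u - v)) (u - v)).re ≤ |(sip A (T (u - v)) (u - v)).re| := neg_le_abs _
      _ ≤ ‖sip A (T (u - v)) (u - v)‖ := Complex.abs_re_le_norm _
  have hMsum : M * normA A (u + v) ^ 2 + M * normA A (u - v) ^ 2 = 4 * M := by
    rw [← mul_add, hsum]; ring
  linarith [h1, h2, hre, hMsum]

lemma sSup_SS_nonneg (hA : A.IsPositive) (hsa : IsSelfAdjoint (A ∘L T))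
    (hrank : 2 ≤ Module.rank ℂ (LinearMap.range (A : H →ₗ[ℂ] H)))
    (q : ℂ) (hq : ‖q‖ ≤ 1) : 0 ≤ sSup (SS A T q) := by
  obtain ⟨x, hx⟩ := exists_unitA A hA hrank
  obtain ⟨e, he, hex⟩ := exists_orth A hA hrank hx
  obtain ⟨hy1, hy2, _⟩ := build A T hA hx he hex q hq 1 (by norm_num)
  have hmem : ‖sip A (T x)
      ((starRingEnd ℂ) q • x + ((1 * Real.sqrt (1 - ‖q‖ ^ 2) : ℝ) : ℂ) • e)‖
      ∈ SS A T q := ⟨x, _, hx, hy1, hy2, rfl⟩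
  exact le_trans (norm_nonneg _) (le_csSup (SS_bddAbove A T hA hsa q) hmem)

end sets

theorem stmt0 (A T : H →L[ℂ] H) (hA : A.IsPositive)
    (hrank : 2 ≤ Module.rank ℂ (LinearMap.range (A : H →ₗ[ℂ] H)))
    (hadj : ∃ S : H →L[ℂ] H, ∀ x y : H, sip A (T x) y = sip A x (S y))
    (hsa : IsSelfAdjoint (A ∘L T))
    (q : ℂ) (hq : ‖q‖ ≤ 1) :
    ‖q‖ * wqA A T 1 ≤ wqA A T q ∧ wqA A T q ≤ wqA A T 1 := by
  rw [wqA_eq A T 1, wqA_eq A T q]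
  constructor
  · -- lower bound
    by_cases hq0 : q = 0
    · subst hq0
      simp only [norm_zero, zero_mul]
      exact sSup_SS_nonneg A T hA hsa hrank 0 (by simp)
    · have hqa : 0 < ‖q‖ := by
        simpa [norm_pos_iff] using hq0
      rw [mul_comm, ← le_div_iff₀ hqa]
      apply Real.sSup_le
      · rintro r ⟨x, y, hx, hy, hxy, rfl⟩
        rw [le_div_iff₀ hqa]
        -- Step 1 : r = |sip (T x) x|
        have hyx : sip A y x = 1 := by
          rw [sip_conj A hA x y, hxy, map_one]
        have hdd : (sip A (y - x) (y - x)).re = 0 := by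
          rw [sip_sub_left, sip_sub_right, sip_sub_right, hxy, hyx,
            sip_self_one A hA hx, sip_self_one A hA hy]
          norm_num
        have hnd : normA A (y - x) = 0 := by rw [normA, hdd, Real.sqrt_zero]
        have habs0 : ‖sip A (T x) (y - x)‖ ≤ 0 := by
          calc ‖sip A (T x) (y - x)‖
              ≤ normA A (T x) * normA A (y - x) := sip_cs A hA _ _
            _ = 0 := by rw [hnd, mul_zero]
        have h0 : sip A (T x) (y - x) = 0 :=
          norm_eq_zero.mp (le_antisymm habs0 (norm_nonneg _))
        rw [sip_sub_right] at h0
        have heq : sip A (T x) y = sip A (T x) x := sub_eq_zero.mp h0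
        -- Step 2 : construct elements of SS q
        obtain ⟨e, he, hex⟩ := exists_orth A hA hrank hx
        obtain ⟨ha1, ha2, ha3⟩ := build A T hA hx he hex q hq 1 (by norm_num)
        obtain ⟨hb1, hb2, hb3⟩ := build A T hA hx he hex q hq (-1) (by norm_num)
        set s0 : ℝ := Real.sqrt (1 - ‖q‖ ^ 2) with hs0
        set a : ℂ := q * sip A (T x) x with hadef
        set c : ℂ := ((s0 : ℝ) : ℂ) * sip A (T x) e with hcdef
        have hmema : ‖sip A (T x)
            ((starRingEnd ℂ) q • x + ((1 * s0 : ℝ) : ℂ) • e)‖ ∈ SS A T q :=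
          ⟨x, _, hx, ha1, ha2, rfl⟩
        have hmemb : ‖sip A (T x)
            ((starRingEnd ℂ) q • x + ((-1 * s0 : ℝ) : ℂ) • e)‖ ∈ SS A T q :=
          ⟨x, _, hx, hb1, hb2, rfl⟩
        have hva : sip A (T x) ((starRingEnd ℂ) q • x + ((1 * s0 : ℝ) : ℂ) • e) = a + c := by
          rw [ha3, hadef, hcdef]
          push_cast
          ring
        have hvb : sip A (T x) ((starRingEnd ℂ) q • x + ((-1 * s0 : ℝ) : ℂ) • e) = a - c := by
          rw [hb3, hadef, hcdef]
          push_cast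
          ring
        rw [hva] at hmema
        rw [hvb] at hmemb
        have hba := le_csSup (SS_bddAbove A T hA hsa q) hmema
        have hbb := le_csSup (SS_bddAbove A T hA hsa q) hmemb
        have htri : 2 * ‖a‖ ≤ ‖a + c‖ + ‖a - c‖ := by
          have h2a : ‖2 * a‖ = 2 * ‖a‖ := by
            rw [norm_mul, Complex.norm_two]
          calc 2 * ‖a‖ = ‖(a + c) + (a - c)‖ := by
                rw [show (a + c) + (a - c) = 2 * a by ring, h2a]
            _ ≤ ‖a + c‖ + ‖a - c‖ := norm_add_le _ _
        have habsa : ‖a‖ = ‖q‖ * ‖sip A (T x) x‖ := by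
          rw [hadef]
          exact norm_mul q (sip A (T x) x)
        rw [heq]
        calc ‖sip A (T x) x‖ * ‖q‖
            = ‖a‖ := by rw [habsa]; ring
          _ ≤ sSup (SS A T q) := by linarith
      · exact div_nonneg (sSup_SS_nonneg A T hA hsa hrank q hq) (le_of_lt hqa)
  · -- upper bound
    apply Real.sSup_le
    · intro r hr
      exact SS_le A T hA hsa hr
    · exact sSup_SS_nonneg A T hA hsa hrank 1 (by simp)
end

section
/- Let T be a bounded linear operator on a complex Hilbert space H admitting an A-adjoint, and let q be a nonzero complex number with |q| ≤ 1. Then (|q|/2)·‖T‖_A ≤ w_{q,A}(T) ≤ ‖T‖_A, where ‖T‖_A is the A-operator seminorm and w_{q,A} is the A-q-numerical radius. -/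
set_option maxHeartbeats 1000000


open scoped InnerProductSpace

variable {H : Type*} [NormedAddCommGroup H] [InnerProductSpace ℂ H] [CompleteSpace H]

theorem stmt1 (A T : H →L[ℂ] H) (hA : A.IsPositive)
    (hrank : 2 ≤ Module.rank ℂ (LinearMap.range (A : H →ₗ[ℂ] H)))
    (hadj : ∃ S : H →L[ℂ] H, ∀ x y : H, sip A (T x) y = sip A x (S y))
    (q : ℂ) (hq0 : q ≠ 0) (hq : ‖q‖ ≤ 1) :
    ‖q‖ / 2 * opNormA A T ≤ wqA A T q ∧ wqA A T q ≤ opNormA A T := by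
  obtain ⟨S, hS⟩ := hadj
  -- the square root of `A`
  have h0 : 0 ≤ A := (ContinuousLinearMap.nonneg_iff_isPositive A).2 hA
  obtain ⟨R, hRpos, hRmul⟩ : ∃ R : H →L[ℂ] H, R.IsPositive ∧ R * R = A :=
    ⟨CFC.sqrt A, (ContinuousLinearMap.nonneg_iff_isPositive _).1 (CFC.sqrt_nonneg A),
      CFC.sqrt_mul_sqrt_self A h0⟩
  have hRR : ∀ x, R (R x) = A x := by
    intro x
    calc R (R x) = (R * R) x := rfl
    _ = A x := by rw [hRmul]
  have hs : ∀ x y : H, ⟪R x, y⟫_ℂ = ⟪x, R y⟫_ℂ := fun x y =>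
    (ContinuousLinearMap.isSelfAdjoint_iff_isSymmetric.1 hRpos.isSelfAdjoint) x y
  have hsA : ∀ x y : H, ⟪A x, y⟫_ℂ = ⟪x, A y⟫_ℂ := fun x y =>
    (ContinuousLinearMap.isSelfAdjoint_iff_isSymmetric.1 hA.isSelfAdjoint) x y
  -- sip and normA in terms of R
  have hsip : ∀ x y : H, sip A x y = ⟪R y, R x⟫_ℂ := by
    intro x y
    show ⟪y, A x⟫_ℂ = ⟪R y, R x⟫_ℂ
    rw [← hRR, hs y (R x)]
  have hnorm : ∀ x : H, normA A x = ‖R x‖ := by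
    intro x
    rw [normA, hsip]
    have : RCLike.re ⟪R x, R x⟫_ℂ = ‖R x‖^2 := inner_self_eq_norm_sq (R x)
    rw [show (⟪R x, R x⟫_ℂ).re = RCLike.re ⟪R x, R x⟫_ℂ from rfl, this,
      Real.sqrt_sq (norm_nonneg _)]
  -- adjoint relations
  have hT : ∀ x y : H, ⟪R y, R (T x)⟫_ℂ = ⟪R (S y), R x⟫_ℂ := by
    intro x y; have := hS x y; rwa [hsip, hsip] at this
  have hconj : ∀ x y : H, (starRingEnd ℂ) (sip A x y) = sip A y x := by
    intro x y; rw [hsip, hsip, inner_conj_symm]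
  have hSadj : ∀ x y : H, sip A (S x) y = sip A x (T y) := by
    intro x y
    have h1 : sip A (S x) y = (starRingEnd ℂ) (sip A y (S x)) := (hconj y (S x)).symm ▸ rfl
    rw [← hconj y (S x), ← hS y x, hconj (T y) x]
  set B : H →L[ℂ] H := S.comp T with hBdef
  have hBapp : ∀ x : H, B x = S (T x) := fun x => rfl
  have hBsym : ∀ x y : H, ⟪R y, R (B x)⟫_ℂ = ⟪R (B y), R x⟫_ℂ := by
    intro x y
    have h1 : sip A (B x) y = sip A x (B y) := by
      rw [hBapp, hSadj (T x) y, hS x (T y), hBapp]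
    rw [hsip, hsip] at h1; exact h1
  have hBk : ∀ (k : ℕ) (x y : H), ⟪R y, R ((B^k) x)⟫_ℂ = ⟪R ((B^k) y), R x⟫_ℂ := by
    intro k
    induction k with
    | zero => intro x y; simp
    | succ n ih =>
      intro x y
      have e1 : (B^(n+1)) x = (B^n) (B x) := by rw [pow_succ]; rfl
      have e2 : (B^(n+1)) y = B ((B^n) y) := by rw [pow_succ']; rfl
      rw [e1, e2, ih (B x) y, hBsym]
  -- basic Cauchy-Schwarz style bounds
  have habs : ∀ z w : H, ‖⟪z, w⟫_ℂ‖ ≤ ‖z‖ * ‖w‖ := by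
    intro z w; exact norm_inner_le_norm z w
  have hsq : ∀ (k : ℕ) (x : H), ‖R ((B^k) x)‖^2 ≤ ‖R x‖ * ‖R ((B^(2*k)) x)‖ := by
    intro k x
    have e1 : ⟪R ((B^k) x), R ((B^k) x)⟫_ℂ = ⟪R ((B^(2*k)) x), R x⟫_ℂ := by
      rw [hBk k x ((B^k) x)]
      congr 2
      show (B^k) ((B^k) x) = (B^(2*k)) x
      rw [two_mul, pow_add]; rfl
    have e2 : (‖R ((B^k) x)‖^2 : ℝ) = ‖⟪R ((B^k) x), R ((B^k) x)⟫_ℂ‖ := by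
      rw [inner_self_eq_norm_sq_to_K (𝕜 := ℂ), norm_pow,
        RCLike.norm_ofReal, abs_of_nonneg (norm_nonneg _)]
    rw [e2, e1]
    exact (habs _ _).trans_eq (mul_comm _ _)
  have hiter : ∀ (n : ℕ) (x : H),
      ‖R (B x)‖^(2^n) ≤ ‖R x‖^(2^n - 1) * ‖R ((B^(2^n)) x)‖ := by
    intro n
    induction n with
    | zero => intro x; simpa using le_of_eq rfl
    | succ n ih =>
      intro x
      have h1 : 1 ≤ 2^n := Nat.one_le_two_pow
      have step1 : (‖R (B x)‖^(2^n))^2 ≤ (‖R x‖^(2^n - 1) * ‖R ((B^(2^n)) x)‖)^2 :=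
        pow_le_pow_left₀ (pow_nonneg (norm_nonneg _) _) (ih x) 2
      have step2 : (‖R x‖^(2^n - 1) * ‖R ((B^(2^n)) x)‖)^2
          = ‖R x‖^((2^n - 1)*2) * ‖R ((B^(2^n)) x)‖^2 := by
        rw [mul_pow, ← pow_mul]
      have step3 : ‖R ((B^(2^n)) x)‖^2 ≤ ‖R x‖ * ‖R ((B^(2^(n+1))) x)‖ := by
        have := hsq (2^n) x
        rwa [show 2 * 2^n = 2^(n+1) by ring] at this
      calc ‖R (B x)‖^(2^(n+1)) = (‖R (B x)‖^(2^n))^2 := by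
            rw [← pow_mul, pow_succ]
      _ ≤ ‖R x‖^((2^n - 1)*2) * ‖R ((B^(2^n)) x)‖^2 := step2 ▸ step1
      _ ≤ ‖R x‖^((2^n - 1)*2) * (‖R x‖ * ‖R ((B^(2^(n+1))) x)‖) := by
            apply mul_le_mul_of_nonneg_left step3 (pow_nonneg (norm_nonneg _) _)
      _ = ‖R x‖^((2^n - 1)*2 + 1) * ‖R ((B^(2^(n+1))) x)‖ := by
            rw [pow_succ]; ring
      _ = ‖R x‖^(2^(n+1) - 1) * ‖R ((B^(2^(n+1))) x)‖ := by
            congr 2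
            have : 1 ≤ 2^n := h1
            omega
  -- `R ∘ B` vanishes where `R` does
  have hB0 : ∀ x : H, R x = 0 → R (B x) = 0 := by
    intro x hx
    have : ⟪R (B x), R (B x)⟫_ℂ = 0 := by
      rw [hBsym x (B x), hx, inner_zero_right]
    exact inner_self_eq_zero.1 this
  -- key bound : ‖R (B x)‖ ≤ ‖B‖ ‖R x‖
  have hBbound : ∀ x : H, ‖R (B x)‖ ≤ ‖B‖ * ‖R x‖ := by
    intro x
    by_cases hx : R x = 0
    · rw [hB0 x hx, hx]; simp
    · have hb : 0 < ‖R x‖ := norm_pos_iff.2 hx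
      by_contra hcon
      push_neg at hcon
      set a := ‖R (B x)‖
      set b := ‖R x‖
      set c := ‖B‖
      have hc0 : 0 ≤ c := norm_nonneg _
      have ha : 0 < a := lt_of_le_of_lt (mul_nonneg hc0 hb.le) hcon
      have hc : 0 < c := by
        rcases hc0.lt_or_eq with h | h
        · exact h
        · exfalso
          have : B = 0 := by
            have := norm_eq_zero.1 h.symm
            exact this
          have : B x = 0 := by rw [this]; rfl
          have : a = 0 := by simp [a, this]
          exact absurd this ha.ne'
      set K := ‖R‖ * ‖x‖ with hK
      have hbound : ∀ n : ℕ, a^(2^n) ≤ b^(2^n - 1) * (K * c^(2^n)) := by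
        intro n
        refine (hiter n x).trans ?_
        apply mul_le_mul_of_nonneg_left ?_ (pow_nonneg hb.le _)
        calc ‖R ((B^(2^n)) x)‖ ≤ ‖R‖ * ‖(B^(2^n)) x‖ := R.le_opNorm _
        _ ≤ ‖R‖ * (‖B^(2^n)‖ * ‖x‖) := by
              exact mul_le_mul_of_nonneg_left ((B^(2^n)).le_opNorm x) (norm_nonneg _)
        _ ≤ ‖R‖ * (‖B‖^(2^n) * ‖x‖) := by
              apply mul_le_mul_of_nonneg_left ?_ (norm_nonneg _)
              exact mul_le_mul_of_nonneg_right (norm_pow_le' B (Nat.two_pow_pos n)) (norm_nonneg _)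
        _ = K * c^(2^n) := by ring
      set t := a / (c * b) with ht
      have ht1 : 1 < t := by
        rw [ht, lt_div_iff₀ (mul_pos hc hb)]
        simpa [mul_comm] using hcon
      obtain ⟨n, hn⟩ := pow_unbounded_of_one_lt (K / b) ht1
      have h2n : t^n ≤ t^(2^n) := pow_le_pow_right₀ ht1.le (Nat.lt_two_pow_self (n := n)).le
      have hfin : t^(2^n) ≤ K / b := by
        rw [ht, div_pow, div_le_div_iff₀ (by positivity) hb]
        calc a^(2^n) * b ≤ (b^(2^n - 1) * (K * c^(2^n))) * b :=
              mul_le_mul_of_nonneg_right (hbound n) hb.le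
        _ = K * c^(2^n) * b^(2^n - 1 + 1) := by rw [pow_succ]; ring
        _ = K / b * ((c*b)^(2^n) * b) := by
              rw [Nat.sub_add_cancel Nat.one_le_two_pow, mul_pow]
              field_simp
        _ = K * (c*b)^(2^n) := by field_simp
      exact absurd (hn.trans_le (h2n.trans hfin)) (lt_irrefl _)
  have hTbound : ∀ x : H, ‖R (T x)‖ ≤ Real.sqrt ‖B‖ * ‖R x‖ := by
    intro x
    have e1 : ⟪R (T x), R (T x)⟫_ℂ = ⟪R (B x), R x⟫_ℂ := by
      have := hS x (T x)
      rw [hsip, hsip] at this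
      rw [this]; rfl
    have e2 : (‖R (T x)‖^2 : ℝ) = ‖⟪R (T x), R (T x)⟫_ℂ‖ := by
      rw [inner_self_eq_norm_sq_to_K (𝕜 := ℂ), norm_pow,
        RCLike.norm_ofReal, abs_of_nonneg (norm_nonneg _)]
    have e3 : ‖R (T x)‖^2 ≤ ‖B‖ * ‖R x‖^2 := by
      rw [e2, e1]
      calc ‖⟪R (B x), R x⟫_ℂ‖ ≤ ‖R (B x)‖ * ‖R x‖ := habs _ _
      _ ≤ (‖B‖ * ‖R x‖) * ‖R x‖ := mul_le_mul_of_nonneg_right (hBbound x) (norm_nonneg _)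
      _ = ‖B‖ * ‖R x‖^2 := by ring
    calc ‖R (T x)‖ = Real.sqrt (‖R (T x)‖^2) := (Real.sqrt_sq (norm_nonneg _)).symm
    _ ≤ Real.sqrt (‖B‖ * ‖R x‖^2) := Real.sqrt_le_sqrt e3
    _ = Real.sqrt ‖B‖ * ‖R x‖ := by
          rw [Real.sqrt_mul (norm_nonneg _), Real.sqrt_sq (norm_nonneg _)]

  -- sets
  set W : Set ℝ := {r : ℝ | ∃ x y : H, normA A x = 1 ∧ normA A y = 1 ∧ sip A x y = q ∧
    r = ‖sip A (T x) y‖} with hWdef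
  set O : Set ℝ := {r : ℝ | ∃ x ∈ closure (Set.range fun v => A v), x ≠ 0 ∧
    r = normA A (T x) / normA A x} with hOdef
  have hwq : wqA A T q = sSup W := rfl
  have hop : opNormA A T = sSup O := rfl
  have hOb : BddAbove O := by
    refine ⟨Real.sqrt ‖B‖, ?_⟩
    rintro r ⟨x, hx, hx0, rfl⟩
    rw [hnorm, hnorm]
    rcases eq_or_ne (‖R x‖) 0 with h | h
    · rw [h, div_zero]; positivity
    · rw [div_le_iff₀ (lt_of_le_of_ne (norm_nonneg _) (Ne.symm h))]
      exact hTbound x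
  have hWb : BddAbove W := by
    refine ⟨Real.sqrt ‖B‖, ?_⟩
    rintro r ⟨x, y, hx, hy, hxy, rfl⟩
    rw [hnorm] at hx hy
    rw [hsip]
    calc ‖⟪R y, R (T x)⟫_ℂ‖ ≤ ‖R y‖ * ‖R (T x)‖ := habs _ _
    _ = ‖R (T x)‖ := by rw [hy, one_mul]
    _ ≤ Real.sqrt ‖B‖ * ‖R x‖ := hTbound x
    _ = Real.sqrt ‖B‖ := by rw [hx, mul_one]
  -- vanishing of R on the closure implies vanishing of the vector
  have hclos : ∀ x : H, x ∈ closure (Set.range fun v => A v) → R x = 0 → x = 0 := by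
    intro x hx hRx
    have hAx : A x = 0 := by rw [← hRR, hRx, map_zero]
    have hsub : closure (Set.range fun v => A v) ⊆ {y : H | ⟪y, x⟫_ℂ = 0} := by
      apply closure_minimal
      · rintro _ ⟨v, rfl⟩
        show ⟪A v, x⟫_ℂ = 0
        rw [hsA v x, hAx, inner_zero_right]
      · exact isClosed_eq (continuous_id.inner continuous_const) continuous_const
    exact inner_self_eq_zero.1 (hsub hx)
  -- rank facts
  have hrankR : ∀ x : H, ¬ (∀ v : H, R v ∈ Submodule.span ℂ {R x}) := by
    intro x hall
    have h1 : LinearMap.range (A : H →ₗ[ℂ] H) ≤ Submodule.span ℂ {R x} := by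
      intro y hy
      obtain ⟨v, rfl⟩ := hy
      show A v ∈ _
      rw [← hRR]
      exact hall (R v)
    have h2 := Submodule.rank_mono h1
    have h3 : Module.rank ℂ (Submodule.span ℂ ({R x} : Set H)) ≤ 1 := by
      simpa using rank_span_le (R := ℂ) ({R x} : Set H)
    have hcontr := hrank.trans (h2.trans h3)
    norm_num at hcontr
  have hunit : ∀ u : H, R u ≠ 0 → ‖R (((‖R u‖ : ℝ) : ℂ)⁻¹ • u)‖ = 1 := by
    intro u hu
    rw [map_smul, norm_smul, norm_inv, Complex.norm_real, Real.norm_eq_abs,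
      abs_of_nonneg (norm_nonneg _), inv_mul_cancel₀ (norm_ne_zero_iff.2 hu)]
  -- Gram-Schmidt
  have hGS : ∀ x : H, R x ≠ 0 → ∃ z : H, ‖R z‖ = 1 ∧ ⟪R z, R x⟫_ℂ = 0 := by
    intro x hx
    have h := hrankR x
    push_neg at h
    obtain ⟨v, hv⟩ := h
    set c : ℂ := ⟪R x, R v⟫_ℂ / ⟪R x, R x⟫_ℂ with hc
    set u : H := v - c • x with hu
    have hRu : R u = R v - c • R x := by rw [hu, map_sub, map_smul]
    have hRune : R u ≠ 0 := by
      intro h0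
      apply hv
      rw [Submodule.mem_span_singleton]
      rw [hRu] at h0
      exact ⟨c, (sub_eq_zero.1 h0).symm⟩
    have horth : ⟪R x, R u⟫_ℂ = 0 := by
      rw [hRu, inner_sub_right, inner_smul_right, hc]
      have hxx : ⟪R x, R x⟫_ℂ ≠ 0 := inner_self_ne_zero.2 hx
      field_simp
      ring
    refine ⟨((‖R u‖ : ℝ) : ℂ)⁻¹ • u, hunit u hRune, ?_⟩
    rw [map_smul, inner_smul_left, inner_eq_zero_symm.1 horth, mul_zero]
  -- a vector with A v ≠ 0
  have hvex : ∃ v : H, A v ≠ 0 := by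
    by_contra hcon
    push_neg at hcon
    have hb : LinearMap.range (A : H →ₗ[ℂ] H) ≤ ⊥ := by
      intro y hy
      obtain ⟨v, rfl⟩ := hy
      exact (Submodule.mem_bot ℂ).2 (hcon v)
    have h2 := Submodule.rank_mono hb
    rw [rank_bot] at h2
    have := hrank.trans h2
    norm_num at this
  -- the key inequality : |q ⟨Tx,x⟩_A| ≤ sSup W for A-unit x
  have hw0aux : ∀ x : H, ‖R x‖ = 1 →
      ‖q * ⟪R x, R (T x)⟫_ℂ‖ ≤ sSup W ∧ 0 ≤ sSup W := by
    intro x hx1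
    have hx0 : R x ≠ 0 := by intro h; rw [h, norm_zero] at hx1; norm_num at hx1
    obtain ⟨z, hz1, hz2⟩ := hGS x hx0
    have hxz : ⟪R x, R z⟫_ℂ = 0 := inner_eq_zero_symm.1 hz2
    set s : ℝ := Real.sqrt (1 - ‖q‖^2) with hsdef
    have hq2 : (0:ℝ) ≤ 1 - ‖q‖^2 := by nlinarith [norm_nonneg q]
    have hs2 : s^2 = 1 - ‖q‖^2 := Real.sq_sqrt hq2
    have hs0 : 0 ≤ s := Real.sqrt_nonneg _
    have hxx : ⟪R x, R x⟫_ℂ = 1 := by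
      rw [inner_self_eq_norm_sq_to_K (𝕜 := ℂ), hx1]; norm_num
    have hmem : ∀ ε : ℂ, ‖ε‖ = 1 →
        ‖q * ⟪R x, R (T x)⟫_ℂ + (ε * (s:ℂ)) * ⟪R z, R (T x)⟫_ℂ‖ ≤ sSup W := by
      intro ε hε
      set y : H := (starRingEnd ℂ q) • x + (starRingEnd ℂ (ε * (s:ℂ))) • z with hy
      have hRy : R y = (starRingEnd ℂ q) • R x + (starRingEnd ℂ (ε * (s:ℂ))) • R z := by
        rw [hy, map_add, map_smul, map_smul]
      have hyn : normA A y = 1 := by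
        rw [hnorm, hRy]
        have hcross : ⟪(starRingEnd ℂ q) • R x, (starRingEnd ℂ (ε * (s:ℂ))) • R z⟫_ℂ = 0 := by
          rw [inner_smul_left, inner_smul_right, hxz, mul_zero, mul_zero]
        have hnsq : ‖(starRingEnd ℂ q) • R x + (starRingEnd ℂ (ε * (s:ℂ))) • R z‖^2 = 1 := by
          rw [norm_add_sq (𝕜 := ℂ), hcross, map_zero, norm_smul, norm_smul]
          rw [RCLike.norm_conj, RCLike.norm_conj, hx1, hz1]
          rw [norm_mul, hε, Complex.norm_real, Real.norm_eq_abs,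
            abs_of_nonneg hs0]
          ring_nf
          nlinarith [hs2]
        rw [← Real.sqrt_sq (norm_nonneg _), hnsq, Real.sqrt_one]
      have hsipxy : sip A x y = q := by
        rw [hsip, hRy, inner_add_left, inner_smul_left, inner_smul_left]
        rw [Complex.conj_conj, Complex.conj_conj, hxx, hz2, mul_zero, mul_one, add_zero]
      have hsipTxy : sip A (T x) y
          = q * ⟪R x, R (T x)⟫_ℂ + (ε * (s:ℂ)) * ⟪R z, R (T x)⟫_ℂ := by
        rw [hsip, hRy, inner_add_left, inner_smul_left, inner_smul_left,
          Complex.conj_conj, Complex.conj_conj]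
      refine le_csSup hWb ?_
      exact ⟨x, y, by rw [hnorm]; exact hx1, hyn, hsipxy, by rw [hsipTxy]⟩
    have h1 := hmem 1 (by simp)
    have h2 := hmem (-1) (by simp)
    set u : ℂ := q * ⟪R x, R (T x)⟫_ℂ with hudef
    set w : ℂ := (s:ℂ) * ⟪R z, R (T x)⟫_ℂ with hwdef
    have h1' : ‖u + w‖ ≤ sSup W := by
      simpa [one_mul] using h1
    have h2' : ‖u - w‖ ≤ sSup W := by
      have : u + (-1 * (s:ℂ)) * ⟪R z, R (T x)⟫_ℂ = u - w := by rw [hwdef]; ring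
      rw [← this]
      exact h2
    have hW0 : 0 ≤ sSup W := le_trans (norm_nonneg _) h1'
    constructor
    · have hpar := parallelogram_law_with_norm ℂ u w
      have husq : ‖u‖^2 ≤ (sSup W)^2 := by
        nlinarith [norm_nonneg (u + w), norm_nonneg (u - w), norm_nonneg w, norm_nonneg u]
      calc ‖u‖ = ‖u‖ := rfl
      _ = Real.sqrt (‖u‖^2) := (Real.sqrt_sq (norm_nonneg _)).symm
      _ ≤ Real.sqrt ((sSup W)^2) := Real.sqrt_le_sqrt husq
      _ = sSup W := Real.sqrt_sq hW0
    · exact hW0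
  obtain ⟨v₀, hv₀⟩ := hvex
  have hRv₀ : R v₀ ≠ 0 := fun h => hv₀ (by rw [← hRR, h, map_zero])
  have hW0 : 0 ≤ sSup W := (hw0aux _ (hunit v₀ hRv₀)).2
  -- quadratic-form bound for all vectors
  have hQ : ∀ u : H, ‖q‖ * ‖⟪R u, R (T u)⟫_ℂ‖ ≤ sSup W * ‖R u‖^2 := by
    intro u
    rcases eq_or_ne (R u) 0 with h | h
    · rw [h, inner_zero_left, norm_zero, mul_zero]
      nlinarith [hW0]
    · have hm : 0 < ‖R u‖ := norm_pos_iff.2 h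
      set x : H := ((‖R u‖ : ℝ) : ℂ)⁻¹ • u with hxdef
      have hx1 : ‖R x‖ = 1 := hunit u h
      have hkey := (hw0aux x hx1).1
      have hxe : ⟪R x, R (T x)⟫_ℂ
          = (starRingEnd ℂ (((‖R u‖ : ℝ) : ℂ)⁻¹)) * (((‖R u‖ : ℝ) : ℂ)⁻¹)
            * ⟪R u, R (T u)⟫_ℂ := by
        rw [hxdef, map_smul, map_smul, map_smul, inner_smul_left, inner_smul_right]
        ring
      rw [hxe] at hkey
      have habs2 : ‖q * ((starRingEnd ℂ (((‖R u‖ : ℝ) : ℂ)⁻¹))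
          * (((‖R u‖ : ℝ) : ℂ)⁻¹) * ⟪R u, R (T u)⟫_ℂ)‖
          = ‖q‖ * (‖R u‖⁻¹ * ‖R u‖⁻¹ * ‖⟪R u, R (T u)⟫_ℂ‖) := by
        rw [norm_mul, norm_mul, norm_mul, RCLike.norm_conj, norm_inv, Complex.norm_real, Real.norm_eq_abs,
          abs_of_nonneg (norm_nonneg _)]
      rw [habs2] at hkey
      have hfin := mul_le_mul_of_nonneg_right hkey (le_of_lt (mul_pos hm hm))
      calc ‖q‖ * ‖⟪R u, R (T u)⟫_ℂ‖
          = ‖q‖ * (‖R u‖⁻¹ * ‖R u‖⁻¹ * ‖⟪R u, R (T u)⟫_ℂ‖)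
            * (‖R u‖ * ‖R u‖) := by field_simp
      _ ≤ sSup W * (‖R u‖ * ‖R u‖) := hfin
      _ = sSup W * ‖R u‖^2 := by ring
  -- polarization identity
  have hpolarId : ∀ x y : H, (4 : ℂ) * ⟪R y, R (T x)⟫_ℂ =
      ⟪R (x+y), R (T (x+y))⟫_ℂ - ⟪R (x-y), R (T (x-y))⟫_ℂ
      + Complex.I * ⟪R (x + Complex.I • y), R (T (x + Complex.I • y))⟫_ℂ
      - Complex.I * ⟪R (x - Complex.I • y), R (T (x - Complex.I • y))⟫_ℂ := by
    intro x y
    simp only [map_add, map_sub, map_smul, inner_add_left, inner_add_right,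
      inner_sub_left, inner_sub_right, inner_smul_left, inner_smul_right,
      Complex.conj_I]
    ring_nf
    simp [Complex.I_sq]
    ring
  have hpolar : ∀ x y : H, ‖R x‖ = 1 → ‖R y‖ = 1 →
      ‖q‖ * ‖⟪R y, R (T x)⟫_ℂ‖ ≤ 2 * sSup W := by
    intro x y hx hy
    have hid := hpolarId x y
    have q0 : 0 ≤ ‖q‖ := norm_nonneg q
    have e1 := hQ (x + y)
    have e2 := hQ (x - y)
    have e3 := hQ (x + Complex.I • y)
    have e4 := hQ (x - Complex.I • y)
    have hp1 : ‖R (x+y)‖^2 + ‖R (x-y)‖^2 = 4 := by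
      have hpl := parallelogram_law_with_norm ℂ (R x) (R y)
      rw [hx, hy] at hpl
      rw [map_add, map_sub, pow_two, pow_two]
      linarith [hpl]
    have hp2 : ‖R (x + Complex.I • y)‖^2 + ‖R (x - Complex.I • y)‖^2 = 4 := by
      have hIy : ‖Complex.I • R y‖ = 1 := by
        rw [norm_smul, Complex.norm_I, one_mul, hy]
      have hpl := parallelogram_law_with_norm ℂ (R x) (Complex.I • R y)
      rw [hx, hIy] at hpl
      rw [map_add, map_sub, map_smul, pow_two, pow_two]
      linarith [hpl]
    have htri : ‖(4 : ℂ) * ⟪R y, R (T x)⟫_ℂ‖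
        ≤ ‖⟪R (x+y), R (T (x+y))⟫_ℂ‖ + ‖⟪R (x-y), R (T (x-y))⟫_ℂ‖
          + ‖⟪R (x + Complex.I • y), R (T (x + Complex.I • y))⟫_ℂ‖
          + ‖⟪R (x - Complex.I • y), R (T (x - Complex.I • y))⟫_ℂ‖ := by
      rw [hid]
      calc ‖_ - _ + _ - _‖ ≤ ‖_ - _ + _‖ + ‖Complex.I * _‖ := norm_sub_le _ _
      _ ≤ (‖_ - _‖ + ‖Complex.I * _‖) + ‖Complex.I * _‖ := by
            apply add_le_add_left (norm_add_le _ _)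
      _ ≤ ((‖_‖ + ‖_‖) + ‖Complex.I * _‖) + ‖Complex.I * _‖ := by
            apply add_le_add_left (add_le_add_left (norm_sub_le _ _) _)
      _ = _ := by rw [norm_mul, norm_mul, Complex.norm_I, one_mul, one_mul]
    have h4 : ‖(4 : ℂ) * ⟪R y, R (T x)⟫_ℂ‖
        = 4 * ‖⟪R y, R (T x)⟫_ℂ‖ := by
      rw [norm_mul]
      norm_num
    have hq4 := mul_le_mul_of_nonneg_left htri q0
    rw [h4] at hq4
    nlinarith [e1, e2, e3, e4, hp1, hp2, hq4, hW0,
      norm_nonneg ⟪R (x+y), R (T (x+y))⟫_ℂ,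
      norm_nonneg ⟪R (x-y), R (T (x-y))⟫_ℂ,
      norm_nonneg ⟪R (x + Complex.I • y), R (T (x + Complex.I • y))⟫_ℂ,
      norm_nonneg ⟪R (x - Complex.I • y), R (T (x - Complex.I • y))⟫_ℂ]
  -- seminorm bound for A-unit vectors
  have hTx : ∀ x : H, ‖R x‖ = 1 → ‖q‖ * ‖R (T x)‖ ≤ 2 * sSup W := by
    intro x hx
    rcases eq_or_ne (R (T x)) 0 with h | h
    · rw [h, norm_zero, mul_zero]; linarith [hW0]
    · set y : H := ((‖R (T x)‖ : ℝ) : ℂ)⁻¹ • (T x) with hy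
      have hy1 : ‖R y‖ = 1 := hunit (T x) h
      have hp := hpolar x y hx hy1
      have hval : ‖⟪R y, R (T x)⟫_ℂ‖ = ‖R (T x)‖ := by
        rw [hy, map_smul, inner_smul_left, norm_mul,
          RCLike.norm_conj, norm_inv, Complex.norm_real, Real.norm_eq_abs,
          abs_of_nonneg (norm_nonneg _)]
        rw [inner_self_eq_norm_sq_to_K (𝕜 := ℂ), norm_pow, RCLike.norm_ofReal,
          abs_of_nonneg (norm_nonneg _)]
        have : 0 < ‖R (T x)‖ := norm_pos_iff.2 h
        field_simp
      rw [hval] at hp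
      exact hp
  -- assemble
  have hqpos : 0 < ‖q‖ := norm_pos_iff.2 hq0
  constructor
  · rw [hwq, hop]
    have hOle : sSup O ≤ 2 * sSup W / ‖q‖ := by
      apply Real.sSup_le
      · rintro r ⟨x, hxcl, hx0, rfl⟩
        have hRx : R x ≠ 0 := fun h => hx0 (hclos x hxcl h)
        have hm : 0 < ‖R x‖ := norm_pos_iff.2 hRx
        have h1 := hTx _ (hunit x hRx)
        have h2 : ‖R (T (((‖R x‖ : ℝ) : ℂ)⁻¹ • x))‖ = ‖R (T x)‖ / ‖R x‖ := by
          rw [map_smul, map_smul, norm_smul, norm_inv, Complex.norm_real,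
            Real.norm_eq_abs, abs_of_nonneg (norm_nonneg _), div_eq_inv_mul]
        rw [h2] at h1
        rw [hnorm, hnorm, le_div_iff₀ hqpos]
        calc ‖R (T x)‖ / ‖R x‖ * ‖q‖
            = ‖q‖ * (‖R (T x)‖ / ‖R x‖) := by ring
        _ ≤ 2 * sSup W := h1
      · positivity
    calc ‖q‖ / 2 * sSup O
        ≤ ‖q‖ / 2 * (2 * sSup W / ‖q‖) := by
          apply mul_le_mul_of_nonneg_left hOle (by positivity)
    _ = sSup W := by field_simp
  · rw [hwq, hop]
    apply Real.sSup_le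
    · rintro r ⟨x, y, hx, hy, hxy, rfl⟩
      rw [hnorm] at hx hy
      set M := (LinearMap.range (A : H →ₗ[ℂ] H)).topologicalClosure with hM
      haveI : CompleteSpace M := (Submodule.isClosed_topologicalClosure _).completeSpace_coe
      set x₁ : H := (M.orthogonalProjectionOnto x : H) with hx₁def
      have hMeq : (M : Set H) = closure (Set.range fun v => A v) := by
        rw [hM, Submodule.topologicalClosure_coe]
        congr 1
      have hx₁mem : x₁ ∈ closure (Set.range fun v => A v) := by
        rw [← hMeq]
        exact (M.orthogonalProjectionOnto x).2
      have hx₂ : x - x₁ ∈ Mᗮ := Submodule.sub_starProjection_mem_orthogonal (K := M) x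
      have hAx₂ : A (x - x₁) = 0 := by
        have hall : ∀ v : H, ⟪A v, x - x₁⟫_ℂ = 0 := fun v =>
          (Submodule.mem_orthogonal M (x - x₁)).1 hx₂ (A v)
            ((LinearMap.range (A : H →ₗ[ℂ] H)).le_topologicalClosure ⟨v, rfl⟩)
        have h3 : ∀ v : H, ⟪v, A (x - x₁)⟫_ℂ = 0 := fun v => by
          rw [← hsA v (x - x₁)]; exact hall v
        exact inner_self_eq_zero.1 (h3 (A (x - x₁)))
      have hRx₂ : R (x - x₁) = 0 := by
        apply (inner_self_eq_zero (𝕜 := ℂ)).1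
        rw [hs (x - x₁) (R (x - x₁)), hRR, hAx₂, inner_zero_right]
      have hRx₁ : R x₁ = R x := by
        have hmap : R (x - x₁) = R x - R x₁ := map_sub R x x₁
        rw [hRx₂] at hmap
        exact (sub_eq_zero.1 hmap.symm).symm
      have hx₁0 : x₁ ≠ 0 := by
        intro h
        rw [h, map_zero] at hRx₁
        rw [← hRx₁, norm_zero] at hx
        norm_num at hx
      have hsplitv : ⟪R y, R (T x)⟫_ℂ = ⟪R y, R (T x₁)⟫_ℂ := by
        have hTx2 : ⟪R y, R (T (x - x₁))⟫_ℂ = 0 := by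
          rw [hT (x - x₁) y, hRx₂, inner_zero_right]
        have hTsplit : T x = T x₁ + T (x - x₁) := by
          rw [← map_add]; congr 1; abel
        rw [hTsplit, map_add, inner_add_right, hTx2, add_zero]
      rw [hsip, hsplitv]
      have h1 : ‖⟪R y, R (T x₁)⟫_ℂ‖ ≤ ‖R (T x₁)‖ := by
        have hh := habs (R y) (R (T x₁))
        rw [hy, one_mul] at hh
        exact hh
      have hmem : normA A (T x₁) / normA A x₁ ∈ O := ⟨x₁, hx₁mem, hx₁0, rfl⟩
      have h2 : normA A (T x₁) / normA A x₁ = ‖R (T x₁)‖ := by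
        rw [hnorm, hnorm, hRx₁, hx, div_one]
      exact h1.trans (h2 ▸ le_csSup hOb hmem)
    · have hmem : normA A (T (A v₀)) / normA A (A v₀) ∈ O :=
        ⟨A v₀, subset_closure ⟨v₀, rfl⟩, hv₀, rfl⟩
      refine le_trans ?_ (le_csSup hOb hmem)
      rw [hnorm, hnorm]
      positivity
end

section
/- Let T be a bounded linear operator on a complex Hilbert space H with A = I (so the ordinary inner product), and let q ∈ (0,1). Then (q/2)·‖T‖ ≤ w_q(T) ≤ ‖T‖, where w_q(T) = sup{|⟨Tx,y⟩| : ‖x‖ = ‖y‖ = 1, ⟨x,y⟩ = q} is the q-numerical radius. -/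
open scoped InnerProductSpace

lemma exists_unit_mul (z : ℂ) : ∃ u : ℂ, ‖u‖ = 1 ∧ z = (‖z‖ : ℂ) * u := by
  by_cases hz : z = 0
  · exact ⟨1, by norm_num, by simp [hz]⟩
  · refine ⟨z / ‖z‖, ?_, ?_⟩
    · rw [norm_div, Complex.norm_real, norm_norm, div_self (norm_ne_zero_iff.mpr hz)]
    · rw [mul_div_cancel₀]
      exact_mod_cast norm_ne_zero_iff.mpr hz

lemma phase_lemma (a b : ℂ) : ∃ c : ℂ, ‖c‖ = 1 ∧
    ‖(a + c * b)‖ = ‖a‖ + ‖b‖ := by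
  obtain ⟨u, hu, hau⟩ := exists_unit_mul a
  obtain ⟨v, hv, hbv⟩ := exists_unit_mul b
  refine ⟨u * (starRingEnd ℂ) v, by simp [norm_mul, hu, hv], ?_⟩
  have hvv : (starRingEnd ℂ) v * v = 1 := by
    rw [Complex.conj_mul', hv]
    norm_num
  have : a + u * (starRingEnd ℂ) v * b = ((‖a‖ + ‖b‖ : ℝ) : ℂ) * u := by
    conv_lhs => rw [hau, hbv]
    push_cast
    calc (‖a‖ : ℂ) * u + u * (starRingEnd ℂ) v * ((‖b‖ : ℂ) * v)
        = (‖a‖ : ℂ) * u + (‖b‖ : ℂ) * u * ((starRingEnd ℂ) v * v) := by ring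
      _ = ((‖a‖ : ℂ) + (‖b‖ : ℂ)) * u := by rw [hvv]; ring
  rw [this, norm_mul, Complex.norm_real, hu, mul_one,
    Real.norm_of_nonneg (by positivity)]

variable {H : Type*} [NormedAddCommGroup H] [InnerProductSpace ℂ H] [CompleteSpace H]

lemma norm_comb (a b c d : ℂ) :
    ‖a - b + Complex.I * c - Complex.I * d‖ ≤ ‖a‖ + ‖b‖ + ‖c‖ + ‖d‖ := by
  have h1 := norm_sub_le (a - b + Complex.I * c) (Complex.I * d)
  have h2 := norm_add_le (a - b) (Complex.I * c)
  have h3 := norm_sub_le a b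
  simp only [norm_mul, Complex.norm_I, one_mul] at h1 h2
  linarith

lemma exists_orth_unit (hdim : 2 ≤ Module.rank ℂ H) (x : H) :
    ∃ x' : H, ‖x'‖ = 1 ∧ (inner ℂ x' x : ℂ) = 0 ∧ (inner ℂ x x' : ℂ) = 0 := by
  have hne : (ℂ ∙ x)ᗮ ≠ ⊥ := by
    intro h
    rw [Submodule.orthogonal_eq_bot_iff] at h
    have h1 : Module.rank ℂ H ≤ 1 := by
      have h2 := rank_span_le (R := ℂ) (M := H) {x}
      rw [h, Cardinal.mk_singleton, rank_top] at h2
      exact h2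
    exact absurd (hdim.trans h1) (by norm_num)
  obtain ⟨v, hv, hv0⟩ := Submodule.ne_bot_iff _ |>.mp hne
  have hvx : (inner ℂ x v : ℂ) = 0 :=
    hv x (Submodule.mem_span_singleton_self x)
  refine ⟨((‖v‖ : ℂ))⁻¹ • v, ?_, ?_, ?_⟩
  · rw [norm_smul, norm_inv]
    simp [inv_mul_cancel₀ (norm_ne_zero_iff.mpr hv0)]
  · rw [inner_smul_left, ← inner_conj_symm, hvx]; simp
  · rw [inner_smul_right, hvx, mul_zero]

/-- The `q`-numerical radius of a bounded operator `T`
(with the paper's convention `⟨x,y⟩ = ⟪y,x⟫`). -/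
noncomputable def wq (T : H →L[ℂ] H) (q : ℂ) : ℝ :=
  sSup {r : ℝ | ∃ x y : H, ‖x‖ = 1 ∧ ‖y‖ = 1 ∧ (@inner ℂ H _ y x) = q ∧
    r = ‖(@inner ℂ H _ y (T x))‖}

set_option maxHeartbeats 1000000 in
theorem stmt2 (hdim : 2 ≤ Module.rank ℂ H) (T : H →L[ℂ] H)
    (q : ℝ) (hq : q ∈ Set.Ioo (0 : ℝ) 1) :
    q / 2 * ‖T‖ ≤ wq T (q : ℂ) ∧ wq T (q : ℂ) ≤ ‖T‖ := by
  obtain ⟨hq0, hq1⟩ := hq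
  set S : Set ℝ := {r : ℝ | ∃ x y : H, ‖x‖ = 1 ∧ ‖y‖ = 1 ∧ (@inner ℂ H _ y x) = (q : ℂ) ∧
    r = ‖(@inner ℂ H _ y (T x))‖} with hS
  have hwq : wq T (q : ℂ) = sSup S := rfl
  set w : ℝ := wq T (q : ℂ) with hw
  have hub : ∀ r ∈ S, r ≤ ‖T‖ := by
    rintro r ⟨x, y, hx, hy, -, rfl⟩
    calc ‖(inner ℂ y (T x) : ℂ)‖ ≤ ‖y‖ * ‖T x‖ := norm_inner_le_norm y (T x)
      _ ≤ 1 * (‖T‖ * ‖x‖) := by rw [hy, one_mul, one_mul]; exact T.le_opNorm x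
      _ = ‖T‖ := by rw [hx, one_mul, mul_one]
  have hbdd : BddAbove S := ⟨‖T‖, hub⟩
  have hupper : w ≤ ‖T‖ := by rw [hwq]; exact Real.sSup_le hub (norm_nonneg T)
  refine ⟨?_, hupper⟩
  -- key step: w_q dominates q * |⟨x, Tx⟩| for unit x
  have hkey : ∀ x : H, ‖x‖ = 1 → q * ‖(inner ℂ x (T x) : ℂ)‖ ≤ w := by
    intro x hx
    obtain ⟨x', hx'1, hx'x, hxx'⟩ := exists_orth_unit hdim x
    set s : ℝ := Real.sqrt (1 - q ^ 2) with hsdef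
    have hs0 : 0 ≤ s := Real.sqrt_nonneg _
    have hs2 : s ^ 2 = 1 - q ^ 2 := Real.sq_sqrt (by nlinarith)
    have hs2c : (s : ℂ) ^ 2 = 1 - (q : ℂ) ^ 2 := by exact_mod_cast hs2
    obtain ⟨c, hc1, hc⟩ := phase_lemma ((q : ℂ) * inner ℂ x (T x)) ((s : ℂ) * inner ℂ x' (T x))
    have hcc : (starRingEnd ℂ) c * c = 1 := by
      rw [Complex.conj_mul', hc1]; norm_num
    set y : H := (q : ℂ) • x + ((starRingEnd ℂ) c * (s : ℂ)) • x' with hy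
    have hxx : (inner ℂ x x : ℂ) = 1 := by
      rw [inner_self_eq_norm_sq_to_K, hx]; norm_num
    have hx'x' : (inner ℂ x' x' : ℂ) = 1 := by
      rw [inner_self_eq_norm_sq_to_K, hx'1]; norm_num
    have hyx : (inner ℂ y x : ℂ) = (q : ℂ) := by
      rw [hy, inner_add_left, inner_smul_left, inner_smul_left, hxx, hx'x]
      simp [Complex.conj_ofReal]
    have hyTx : (inner ℂ y (T x) : ℂ)
        = (q : ℂ) * inner ℂ x (T x) + c * ((s : ℂ) * inner ℂ x' (T x)) := by
      rw [hy, inner_add_left, inner_smul_left, inner_smul_left]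
      simp only [map_mul, Complex.conj_conj, Complex.conj_ofReal]
      ring
    have hy1 : ‖y‖ = 1 := by
      have hyy : (inner ℂ y y : ℂ) = 1 := by
        rw [hy]
        simp only [inner_add_left, inner_add_right, inner_smul_left, inner_smul_right,
          hxx, hx'x', hx'x, hxx', map_mul, Complex.conj_conj, Complex.conj_ofReal,
          mul_zero, mul_one, zero_mul, add_zero, zero_add]
        linear_combination ((s : ℂ) ^ 2) * hcc + hs2c
      have h3 : ‖y‖ ^ 2 = 1 := by
        have h2 : RCLike.re (inner ℂ y y : ℂ) = 1 := by rw [hyy]; simp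
        rwa [inner_self_eq_norm_sq] at h2
      nlinarith [norm_nonneg y]
    have hmem : ‖(inner ℂ y (T x) : ℂ)‖ ∈ S := ⟨x, y, hx, hy1, hyx, rfl⟩
    have hle : ‖(inner ℂ y (T x) : ℂ)‖ ≤ w := le_csSup hbdd hmem
    have habs : q * ‖(inner ℂ x (T x) : ℂ)‖
        ≤ ‖(inner ℂ y (T x) : ℂ)‖ := by
      rw [hyTx, hc]
      have h4 : ‖((q : ℂ) * inner ℂ x (T x))‖ = q * ‖(inner ℂ x (T x) : ℂ)‖ := by
        rw [norm_mul, Complex.norm_real, Real.norm_of_nonneg hq0.le]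
      rw [h4]
      have := norm_nonneg ((s : ℂ) * inner ℂ x' (T x))
      linarith
    linarith
  -- nonnegativity of w
  obtain ⟨x₀, hx₀⟩ := rank_pos_iff_exists_ne_zero.mp
    (lt_of_lt_of_le (by norm_num) hdim : (0 : Cardinal) < Module.rank ℂ H)
  have hx₀1 : ‖((‖x₀‖ : ℂ))⁻¹ • x₀‖ = 1 := by
    rw [norm_smul, norm_inv]
    simp [inv_mul_cancel₀ (norm_ne_zero_iff.mpr hx₀)]
  have hw0 : 0 ≤ w := by
    have := hkey _ hx₀1
    have h0 : 0 ≤ q * ‖(inner ℂ (((‖x₀‖ : ℂ))⁻¹ • x₀) (T (((‖x₀‖ : ℂ))⁻¹ • x₀)) : ℂ)‖ :=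
      mul_nonneg hq0.le (norm_nonneg _)
    linarith
  set M : ℝ := w / q with hM
  have hM0 : 0 ≤ M := div_nonneg hw0 hq0.le
  -- quadratic form bound
  have hquad : ∀ z : H, ‖(inner ℂ (T z) z : ℂ)‖ ≤ M * ‖z‖ ^ 2 := by
    intro z
    have hconj : ‖(inner ℂ (T z) z : ℂ)‖ = ‖(inner ℂ z (T z) : ℂ)‖ := by
      rw [← inner_conj_symm, Complex.norm_conj]
    rw [hconj]
    rcases eq_or_ne z 0 with rfl | hz0
    · simp
    · set x : H := ((‖z‖ : ℂ))⁻¹ • z with hxdef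
      have hx1 : ‖x‖ = 1 := by
        rw [hxdef, norm_smul, norm_inv]
        simp [inv_mul_cancel₀ (norm_ne_zero_iff.mpr hz0)]
      have hkx := hkey x hx1
      have hinner : (inner ℂ x (T x) : ℂ) = ((‖z‖ : ℂ))⁻¹ * (((‖z‖ : ℂ))⁻¹ * inner ℂ z (T z)) := by
        rw [hxdef, map_smul, inner_smul_left, inner_smul_right]
        simp [Complex.conj_ofReal]
      have habs2 : ‖(inner ℂ x (T x) : ℂ)‖
          = (‖z‖)⁻¹ * ((‖z‖)⁻¹ * ‖(inner ℂ z (T z) : ℂ)‖) := by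
        rw [hinner]
        simp [norm_mul, norm_inv, Complex.norm_real, abs_of_nonneg (norm_nonneg z)]
      rw [habs2] at hkx
      have hz0' : (0:ℝ) < ‖z‖ := norm_pos_iff.mpr hz0
      rw [hM, div_mul_eq_mul_div, le_div_iff₀ hq0]
      have := mul_le_mul_of_nonneg_left hkx (le_of_lt (mul_pos hz0' hz0'))
      calc ‖(inner ℂ z (T z) : ℂ)‖ * q
          = ‖z‖ * ‖z‖ * (q * ((‖z‖)⁻¹ * ((‖z‖)⁻¹ * ‖(inner ℂ z (T z) : ℂ)‖))) := by
            field_simp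
        _ ≤ ‖z‖ * ‖z‖ * w := this
        _ = w * ‖z‖ ^ 2 := by ring
  -- polarization bound
  have hTuv : ∀ u v : H, ‖u‖ = 1 → ‖v‖ = 1 →
      ‖(inner ℂ (T v) u : ℂ)‖ ≤ 2 * M := by
    intro u v hu hv
    have hp := inner_map_polarization (T : H →ₗ[ℂ] H) u v
    simp only [ContinuousLinearMap.coe_coe] at hp
    rw [hp, norm_div]
    have h4 : ‖(4 : ℂ)‖ = 4 := by norm_num
    rw [h4]
    set a := (inner ℂ (T (u + v)) (u + v) : ℂ) with ha
    set b := (inner ℂ (T (u - v)) (u - v) : ℂ) with hb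
    set c' := (inner ℂ (T (u + Complex.I • v)) (u + Complex.I • v) : ℂ) with hc'
    set d := (inner ℂ (T (u - Complex.I • v)) (u - Complex.I • v) : ℂ) with hd
    clear_value a b c' d
    have tri := norm_comb a b c' d
    have hIv : ‖Complex.I • v‖ = 1 := by
      rw [norm_smul, Complex.norm_I, one_mul, hv]
    have e1 : ‖a‖ ≤ M * ‖u + v‖ ^ 2 := by rw [ha]; exact hquad _
    have e2 : ‖b‖ ≤ M * ‖u - v‖ ^ 2 := by rw [hb]; exact hquad _
    have e3 : ‖c'‖ ≤ M * ‖u + Complex.I • v‖ ^ 2 := by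
      rw [hc']; exact hquad _
    have e4 : ‖d‖ ≤ M * ‖u - Complex.I • v‖ ^ 2 := by
      rw [hd]; exact hquad _
    have par1 : ‖u + v‖ ^ 2 + ‖u - v‖ ^ 2 = 4 := by
      have hpar := parallelogram_law_with_norm ℂ u v
      rw [hu, hv] at hpar
      rw [pow_two, pow_two]
      linarith
    have par2 : ‖u + Complex.I • v‖ ^ 2 + ‖u - Complex.I • v‖ ^ 2 = 4 := by
      have hpar := parallelogram_law_with_norm ℂ u (Complex.I • v)
      rw [hu, hIv] at hpar
      rw [pow_two, pow_two]
      linarith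
    have hA : ‖a‖ + ‖b‖ ≤ 4 * M := by
      have h5 := add_le_add e1 e2
      rw [← mul_add, par1] at h5
      linarith
    have hB : ‖c'‖ + ‖d‖ ≤ 4 * M := by
      have h5 := add_le_add e3 e4
      rw [← mul_add, par2] at h5
      linarith
    have hbig : ‖a - b + Complex.I * c' - Complex.I * d‖ ≤ 8 * M := by linarith
    linarith
  -- operator norm bound
  have hTnorm : ‖T‖ ≤ 2 * M := by
    refine T.opNorm_le_bound (by positivity) (fun v => ?_)
    rcases eq_or_ne v 0 with rfl | hv0
    · simp
    set v1 : H := ((‖v‖ : ℂ))⁻¹ • v with hv1def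
    have hv1 : ‖v1‖ = 1 := by
      rw [hv1def, norm_smul, norm_inv]
      simp [inv_mul_cancel₀ (norm_ne_zero_iff.mpr hv0)]
    have hTv1 : ‖T v1‖ ≤ 2 * M := by
      rcases eq_or_ne (T v1) 0 with h | h
      · rw [h, norm_zero]; positivity
      · have hu1 : ‖((‖T v1‖ : ℂ))⁻¹ • T v1‖ = 1 := by
          rw [norm_smul, norm_inv]
          simp [inv_mul_cancel₀ (norm_ne_zero_iff.mpr h)]
        have := hTuv _ v1 hu1 hv1
        have hne : (‖T v1‖ : ℝ) ≠ 0 := norm_ne_zero_iff.mpr h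
        have hval : (inner ℂ (T v1) (((‖T v1‖ : ℂ))⁻¹ • T v1) : ℂ) = (‖T v1‖ : ℂ) := by
          rw [inner_smul_right, inner_self_eq_norm_sq_to_K]
          norm_cast
          field_simp
          change Complex.ofReal _ * Complex.ofReal _ = Complex.ofReal _
          rw [← Complex.ofReal_mul, one_div, pow_two, Algebra.algebraMap_self, RingHom.id_apply,
            inv_mul_cancel_left₀ hne]
        rw [hval, Complex.norm_real, norm_norm] at this
        exact this
    have hTveq : ‖T v‖ = ‖v‖ * ‖T v1‖ := by
      rw [hv1def, map_smul, norm_smul, norm_inv]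
      simp only [Complex.norm_real, norm_norm]
      exact (mul_inv_cancel_left₀ (norm_ne_zero_iff.mpr hv0) ‖T v‖).symm
    rw [hTveq, mul_comm (2 * M) ‖v‖]
    exact mul_le_mul_of_nonneg_left hTv1 (norm_nonneg v)
  -- conclude
  have : q / 2 * ‖T‖ ≤ q / 2 * (2 * M) := by
    apply mul_le_mul_of_nonneg_left hTnorm (by positivity)
  calc q / 2 * ‖T‖ ≤ q / 2 * (2 * (w / q)) := this
    _ = w := by field_simp
end

section
/- Let T ∈ B_A(H) admit an A-adjoint T^{♯} and let q be a nonzero complex number with |q| ≤ 1. Then (|q|²/4)·‖T^{♯}T + TT^{♯}‖_A ≤ w_{q,A}(T)². -/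
set_option synthInstance.maxHeartbeats 1000000
set_option maxHeartbeats 4000000

open scoped InnerProductSpace ComplexConjugate

lemma auxpow {c K : ℝ} (hc : 1 < c) (h : ∀ n : ℕ, c ^ (2^n) ≤ K) : False := by
  obtain ⟨n, hn⟩ := pow_unbounded_of_one_lt (y := c) K hc
  have h2 : c ^ n ≤ c ^ (2^n) := pow_le_pow_right₀ hc.le (Nat.lt_two_pow_self).le
  linarith [h n]

variable {H : Type*} [NormedAddCommGroup H] [InnerProductSpace ℂ H] [CompleteSpace H]

lemma re_inner_self (a : H) : (⟪a, a⟫_ℂ).re = ‖a‖^2 := by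
  rw [inner_self_eq_norm_sq_to_K (𝕜 := ℂ)]
  simp [← Complex.ofReal_pow]

lemma re_le_norms (a b : H) : (⟪a, b⟫_ℂ).re ≤ ‖a‖ * ‖b‖ :=
  le_trans (Complex.re_le_norm _)
    (by exact norm_inner_le_norm a b)

lemma norm_add_sq_complex (a b : H) :
    ‖a + b‖^2 = ‖a‖^2 + 2 * (⟪a, b⟫_ℂ).re + ‖b‖^2 := by
  have := norm_add_sq (𝕜 := ℂ) (x := a) (y := b)
  simpa using this

lemma norm_sub_sq_complex (a b : H) :
    ‖a - b‖^2 = ‖a‖^2 - 2 * (⟪a, b⟫_ℂ).re + ‖b‖^2 := by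
  have := norm_sub_sq (𝕜 := ℂ) (x := a) (y := b)
  simpa using this

lemma aux_polar (B P : H →L[ℂ] H) (w : ℝ) (hw : 0 ≤ w)
    (hsym : ∀ v u : H, ⟪B v, B (P u)⟫_ℂ = ⟪B (P v), B u⟫_ℂ)
    (hnum : ∀ z : H, |(⟪B z, B (P z)⟫_ℂ).re| ≤ w * ‖B z‖^2) :
    ∀ v : H, ‖B (P v)‖ ≤ w * ‖B v‖ := by
  have key : ∀ u z : H, (⟪B u, B (P z)⟫_ℂ).re ≤ w/2 * (‖B z‖^2 + ‖B u‖^2) := by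
    intro u z
    have e2 : ⟪B z, B (P u)⟫_ℂ = conj ⟪B u, B (P z)⟫_ℂ := by
      rw [hsym z u, ← inner_conj_symm]
    have e1 : ⟪B (z+u), B (P (z+u))⟫_ℂ - ⟪B (z-u), B (P (z-u))⟫_ℂ
        = 2 * conj ⟪B u, B (P z)⟫_ℂ + 2 * ⟪B u, B (P z)⟫_ℂ := by
      simp only [map_add, map_sub, inner_add_left, inner_add_right, inner_sub_left,
        inner_sub_right]
      rw [← e2]; ring
    have e3 : 4 * (⟪B u, B (P z)⟫_ℂ).re
        = (⟪B (z+u), B (P (z+u))⟫_ℂ).re - (⟪B (z-u), B (P (z-u))⟫_ℂ).re := by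
      have := congrArg Complex.re e1
      simp only [Complex.sub_re, Complex.add_re, Complex.mul_re, Complex.conj_re,
        Complex.conj_im] at this
      rw [this]; norm_num; ring
    have hpar : ‖B (z+u)‖^2 + ‖B (z-u)‖^2 = 2*(‖B z‖^2 + ‖B u‖^2) := by
      have h1 : B (z+u) = B z + B u := map_add _ _ _
      have h2 : B (z-u) = B z - B u := map_sub _ _ _
      rw [h1, h2, norm_add_sq_complex, norm_sub_sq_complex]; ring
    have b1 := (abs_le.mp (hnum (z+u))).2
    have b2 := (abs_le.mp (hnum (z-u))).1
    nlinarith [b1, b2, e3, hpar]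
  intro v
  rcases eq_or_ne ‖B (P v)‖ 0 with h0 | h0
  · rw [h0]; positivity
  have hPv : (0:ℝ) < ‖B (P v)‖ := lt_of_le_of_ne (norm_nonneg _) (Ne.symm h0)
  rcases eq_or_ne ‖B v‖ 0 with hv | hv
  · exfalso
    have hinner : ⟪B (P v), B (P v)⟫_ℂ = ⟪B (P (P v)), B v⟫_ℂ := hsym (P v) v
    have h1 : ‖B (P v)‖^2 = (⟪B (P (P v)), B v⟫_ℂ).re := by
      rw [← hinner, re_inner_self]
    have hle := re_le_norms (B (P (P v))) (B v)
    rw [hv, mul_zero] at hle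
    nlinarith
  have hBv : (0:ℝ) < ‖B v‖ := lt_of_le_of_ne (norm_nonneg _) (Ne.symm hv)
  set r : ℝ := ‖B v‖ / ‖B (P v)‖ with hr
  have hrpos : 0 < r := div_pos hBv hPv
  have hBu : B ((r:ℂ) • P v) = (r:ℂ) • B (P v) := map_smul _ _ _
  have hnu : ‖B ((r:ℂ) • P v)‖ = ‖B v‖ := by
    rw [hBu, norm_smul]
    simp only [Complex.norm_real, Real.norm_eq_abs, abs_of_pos hrpos, hr, abs_of_pos (div_pos hBv hPv)]
    field_simp
  have hre : (⟪B ((r:ℂ) • P v), B (P v)⟫_ℂ).re = r * ‖B (P v)‖^2 := by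
    rw [hBu, inner_smul_left, Complex.conj_ofReal]
    have h2 : (⟪B (P v), B (P v)⟫_ℂ).re = ‖B (P v)‖^2 := re_inner_self _
    rw [Complex.mul_re]
    simp [Complex.ofReal_re, Complex.ofReal_im, h2, ← Complex.ofReal_pow]
  have hk := key ((r:ℂ) • P v) v
  rw [hre, hnu] at hk
  have hmain : ‖B v‖ * ‖B (P v)‖ ≤ w * ‖B v‖^2 := by
    have hrw : r * ‖B (P v)‖^2 = ‖B v‖ * ‖B (P v)‖ := by
      rw [hr]; field_simp
    rw [hrw] at hk; linarith
  nlinarith [hmain, hBv]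

theorem stmt3 (A T S : H →L[ℂ] H) (hA : A.IsPositive)
    (hrank : 2 ≤ Module.rank ℂ (LinearMap.range (A : H →ₗ[ℂ] H)))
    (hS : A ∘L S = (ContinuousLinearMap.adjoint T) ∘L A)
    (q : ℂ) (hq0 : q ≠ 0) (hq : ‖q‖ ≤ 1) :
    ‖q‖ ^ 2 / 4 * opNormA A (S ∘L T + T ∘L S) ≤ (wqA A T q) ^ 2 := by
  classical
  have hA0 : 0 ≤ A := (ContinuousLinearMap.nonneg_iff_isPositive A).2 hA
  set B := CFC.sqrt A with hBdef
  have hBsa : IsSelfAdjoint B := (CFC.sqrt_nonneg (a := A)).isSelfAdjoint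
  have hBB : B * B = A := CFC.sqrt_mul_sqrt_self A hA0
  have hAapp : ∀ x : H, A x = B (B x) := by
    intro x; rw [← hBB]; rfl
  have hmove : ∀ x y : H, ⟪B x, y⟫_ℂ = ⟪x, B y⟫_ℂ := by
    intro x y
    conv_lhs => rw [← hBsa.adjoint_eq]
    exact ContinuousLinearMap.adjoint_inner_left B y x
  have hsipBB : ∀ x y : H, sip A x y = ⟪B y, B x⟫_ℂ := by
    intro x y
    show (⟪y, A x⟫_ℂ) = ⟪B y, B x⟫_ℂ
    rw [hAapp, ← hmove]
  have hnormB : ∀ x : H, normA A x = ‖B x‖ := by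
    intro x
    show Real.sqrt (sip A x x).re = ‖B x‖
    rw [hsipBB, re_inner_self, Real.sqrt_sq (norm_nonneg _)]
  -- adjoint identities
  have hS1 : ∀ x, A (S x) = ContinuousLinearMap.adjoint T (A x) := by
    intro x; have := ContinuousLinearMap.ext_iff.mp hS x; simpa using this
  have hS2 : ∀ x, A (T x) = ContinuousLinearMap.adjoint S (A x) := by
    intro x
    have h' := congrArg ContinuousLinearMap.adjoint hS
    rw [ContinuousLinearMap.adjoint_comp, ContinuousLinearMap.adjoint_comp,
      ContinuousLinearMap.adjoint_adjoint, hA.isSelfAdjoint.adjoint_eq] at h'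
    have := ContinuousLinearMap.ext_iff.mp h'.symm x; simpa using this
  have hi : ∀ v u : H, ⟪B v, B (S u)⟫_ℂ = ⟪B (T v), B u⟫_ℂ := by
    intro v u
    rw [hmove, ← hAapp, hS1, ContinuousLinearMap.adjoint_inner_right, hAapp, ← hmove]
  have hii : ∀ v u : H, ⟪B v, B (T u)⟫_ℂ = ⟪B (S v), B u⟫_ℂ := by
    intro v u
    rw [hmove, ← hAapp, hS2, ContinuousLinearMap.adjoint_inner_right, hAapp, ← hmove]
  set R := S ∘L T with hRdef
  have hRapp : ∀ x : H, R x = S (T x) := fun _ => rfl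
  have hRsym : ∀ v u : H, ⟪B v, B (R u)⟫_ℂ = ⟪B (R v), B u⟫_ℂ := by
    intro v u
    rw [hRapp, hRapp, hi v (T u), hii (T v) u]
  have hRk : ∀ k : ℕ, ∀ v u : H, ⟪B v, B ((R^k) u)⟫_ℂ = ⟪B ((R^k) v), B u⟫_ℂ := by
    intro k
    induction k with
    | zero => intro v u; simp
    | succ n ih =>
      intro v u
      have e : (R^(n+1)) u = (R^n) (R u) := by rw [pow_succ]; rfl
      have e' : (R^(n+1)) v = R ((R^n) v) := by rw [pow_succ']; rfl
      rw [e, e', ih v (R u), hRsym ((R^n) v) u]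
  have hRpow : ∀ (k : ℕ) (y : H), ‖(R^k) y‖ ≤ ‖R‖^k * ‖y‖ := by
    intro k
    induction k with
    | zero => intro y; simp
    | succ n ih =>
      intro y
      have e : (R^(n+1)) y = (R^n) (R y) := by rw [pow_succ]; rfl
      calc ‖(R^(n+1)) y‖ = ‖(R^n) (R y)‖ := by rw [e]
        _ ≤ ‖R‖^n * ‖R y‖ := ih (R y)
        _ ≤ ‖R‖^n * (‖R‖ * ‖y‖) :=
            mul_le_mul_of_nonneg_left (R.le_opNorm y) (pow_nonneg (norm_nonneg _) _)
        _ = ‖R‖^(n+1) * ‖y‖ := by rw [pow_succ]; ring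
  -- pointwise bound for ‖B (T x)‖ on the A-unit sphere
  have hTbound : ∀ x : H, ‖B x‖ = 1 → ‖B (T x)‖ ≤ Real.sqrt ‖R‖ := by
    intro x hx
    by_contra hcon
    push_neg at hcon
    set a := ‖B (T x)‖ with ha
    have ha0 : 0 ≤ a := by rw [ha]; exact norm_nonneg _
    have haR : ‖R‖ < a^2 := by
      nlinarith [Real.sq_sqrt (norm_nonneg R), Real.sqrt_nonneg ‖R‖]
    have hsq : ∀ k : ℕ, ‖B ((R^k) x)‖^2 ≤ (‖B‖*‖x‖) * ‖R‖^(2*k) := by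
      intro k
      have h1 : ‖B ((R^k) x)‖^2 = (⟪B ((R^k) ((R^k) x)), B x⟫_ℂ).re := by
        rw [← hRk k ((R^k) x) x, re_inner_self]
      have h2 := re_le_norms (B ((R^k) ((R^k) x))) (B x)
      have h3 : ‖B ((R^k) ((R^k) x))‖ ≤ ‖B‖ * (‖R‖^k * (‖R‖^k * ‖x‖)) := by
        calc ‖B ((R^k) ((R^k) x))‖ ≤ ‖B‖ * ‖(R^k) ((R^k) x)‖ := B.le_opNorm _
          _ ≤ ‖B‖ * (‖R‖^k * ‖(R^k) x‖) :=
              mul_le_mul_of_nonneg_left (hRpow k _) (norm_nonneg _)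
          _ ≤ ‖B‖ * (‖R‖^k * (‖R‖^k * ‖x‖)) :=
              mul_le_mul_of_nonneg_left
                (mul_le_mul_of_nonneg_left (hRpow k x)
                  (pow_nonneg (norm_nonneg _) _)) (norm_nonneg B)
      have hexp : ‖R‖^(2*k) = ‖R‖^k * ‖R‖^k := by rw [two_mul, pow_add]
      rw [h1, hexp]
      calc (⟪B ((R^k) ((R^k) x)), B x⟫_ℂ).re ≤ ‖B ((R^k) ((R^k) x))‖ * ‖B x‖ := h2
        _ = ‖B ((R^k) ((R^k) x))‖ := by rw [hx, mul_one]
        _ ≤ ‖B‖ * (‖R‖^k * (‖R‖^k * ‖x‖)) := h3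
        _ = ‖B‖*‖x‖ * (‖R‖^k * ‖R‖^k) := by ring
    have hchain : ∀ n : ℕ, a^(2^(n+1)) ≤ ‖B ((R^(2^n)) x)‖ := by
      intro n
      induction n with
      | zero =>
        rw [show (2:ℕ)^(0+1) = 2 from rfl, show (2:ℕ)^0 = 1 from rfl, pow_one]
        calc a^2 = (⟪B (T x), B (T x)⟫_ℂ).re := by rw [ha, re_inner_self]
          _ = (⟪B (S (T x)), B x⟫_ℂ).re := by rw [hii (T x) x]
          _ ≤ ‖B (S (T x))‖ * ‖B x‖ := re_le_norms _ _
          _ = ‖B (R x)‖ := by rw [hx, mul_one, hRapp]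
      | succ n ih =>
        have hexp2 : (2:ℕ)^(n+1+1) = 2^(n+1) * 2 := by ring
        rw [hexp2, pow_mul]
        have h2 : ‖B ((R^(2^n)) x)‖^2 = (⟪B ((R^(2^n)) ((R^(2^n)) x)), B x⟫_ℂ).re := by
          rw [← hRk (2^n) ((R^(2^n)) x) x, re_inner_self]
        have h3 : (R^(2^n)) ((R^(2^n)) x) = (R^(2^(n+1))) x := by
          rw [← ContinuousLinearMap.mul_apply, ← pow_add]
          congr 2
          ring
        calc (a^(2^(n+1)))^2 ≤ ‖B ((R^(2^n)) x)‖^2 :=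
              pow_le_pow_left₀ (pow_nonneg ha0 _) ih 2
          _ = (⟪B ((R^(2^(n+1))) x), B x⟫_ℂ).re := by rw [h2, h3]
          _ ≤ ‖B ((R^(2^(n+1))) x)‖ * ‖B x‖ := re_le_norms _ _
          _ = ‖B ((R^(2^(n+1))) x)‖ := by rw [hx, mul_one]
    rcases (norm_nonneg R).eq_or_lt with hR0 | hRpos
    · have hRz : R = 0 := norm_eq_zero.mp hR0.symm
      have h1 := hchain 0
      rw [hRz] at h1
      simp at h1
      nlinarith [haR, h1, hR0.symm]
    · set c := a^2/‖R‖ with hcdef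
      have hc1 : 1 < c := (one_lt_div hRpos).2 haR
      have hc2 : (1:ℝ) < c^2 := by nlinarith
      have hK : ∀ n : ℕ, (c^2)^(2^n) ≤ ‖B‖*‖x‖ := by
        intro n
        have hm : (c^2)^(2^n) = c^(2^(n+1)) := by rw [← pow_mul]; congr 1; ring
        have h1 := hchain n
        have h2 := hsq (2^n)
        have hee : 2*2^n = 2^(n+1) := by ring
        rw [hee] at h2
        have h3 : (a^(2^(n+1)))^2 ≤ (‖B‖*‖x‖) * ‖R‖^(2^(n+1)) :=
          le_trans (pow_le_pow_left₀ (pow_nonneg ha0 _) h1 2) h2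
        have h4 : (a^(2^(n+1)))^2 = (a^2)^(2^(n+1)) := by
          rw [← pow_mul, ← pow_mul]; congr 1; ring
        rw [hm, hcdef, div_pow, div_le_iff₀ (pow_pos hRpos _)]
        calc (a^2)^(2^(n+1)) = (a^(2^(n+1)))^2 := h4.symm
          _ ≤ (‖B‖*‖x‖) * ‖R‖^(2^(n+1)) := h3
      exact auxpow hc2 hK
  -- existence of A-orthogonal unit vectors
  have horth : ∀ x : H, ∃ z : H, ‖B z‖ = 1 ∧ ⟪x, A z⟫_ℂ = 0 := by
    intro x
    have hz0 : ∃ z₀ : H, ⟪x, A z₀⟫_ℂ = 0 ∧ B z₀ ≠ 0 := by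
      by_contra hno
      push_neg at hno
      have hAzero : ∀ z : H, ⟪x, A z⟫_ℂ = 0 → A z = 0 := by
        intro z hz
        rw [hAapp, hno z hz, map_zero]
      by_cases hall : ∀ z : H, ⟪x, A z⟫_ℂ = 0
      · have hA0' : ∀ z : H, A z = 0 := fun z => hAzero z (hall z)
        have hrange : LinearMap.range (A : H →ₗ[ℂ] H) = ⊥ := by
          rw [LinearMap.range_eq_bot]
          ext z
          simp [hA0' z]
        rw [hrange] at hrank
        have h2 : Module.rank ℂ (⊥ : Submodule ℂ H) = 0 := rank_bot ℂ H
        exact absurd (hrank.trans_eq h2) (by norm_num)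
      · push_neg at hall
        obtain ⟨u, hu⟩ := hall
        have hsub : ∀ z : H, A z = (⟪x, A z⟫_ℂ / ⟪x, A u⟫_ℂ) • A u := by
          intro z
          have hzz : ⟪x, A (z - (⟪x, A z⟫_ℂ / ⟪x, A u⟫_ℂ) • u)⟫_ℂ = 0 := by
            rw [map_sub, map_smul, inner_sub_right, inner_smul_right,
              div_mul_cancel₀ _ hu, sub_self]
          have h5 := hAzero _ hzz
          rw [map_sub, map_smul, sub_eq_zero] at h5
          exact h5
        have hle : LinearMap.range (A : H →ₗ[ℂ] H) ≤ Submodule.span ℂ {A u} := by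
          rintro y ⟨z, rfl⟩
          have hco : (A : H →ₗ[ℂ] H) z = A z := rfl
          rw [hco, hsub z]
          exact Submodule.smul_mem _ _ (Submodule.mem_span_singleton_self _)
        have h1 : Module.rank ℂ (LinearMap.range (A : H →ₗ[ℂ] H)) ≤ 1 := by
          calc Module.rank ℂ (LinearMap.range (A : H →ₗ[ℂ] H))
              ≤ Module.rank ℂ (Submodule.span ℂ {A u}) := Submodule.rank_mono hle
            _ ≤ Cardinal.mk ({A u} : Set H) := rank_span_le _
            _ = 1 := Cardinal.mk_singleton _
        exact absurd (hrank.trans h1) (by norm_num)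
    obtain ⟨z₀, hz₀1, hz₀2⟩ := hz0
    have hBpos : 0 < ‖B z₀‖ := norm_pos_iff.mpr hz₀2
    refine ⟨((‖B z₀‖⁻¹ : ℝ) : ℂ) • z₀, ?_, ?_⟩
    · rw [map_smul, norm_smul, Complex.norm_real, Real.norm_eq_abs,
        abs_of_pos (inv_pos.mpr hBpos)]
      exact inv_mul_cancel₀ (ne_of_gt hBpos)
    · rw [map_smul, inner_smul_right, hz₀1, mul_zero]
  set Wset : Set ℝ := {r : ℝ | ∃ x y : H, normA A x = 1 ∧ normA A y = 1 ∧ sip A x y = q ∧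
      r = ‖sip A (T x) y‖} with hWset
  have hwqQ : wqA A T q = sSup Wset := rfl
  have hbddW : BddAbove Wset := by
    refine ⟨Real.sqrt ‖R‖, ?_⟩
    rintro r ⟨x, y, hx, hy, hxy, rfl⟩
    rw [hnormB] at hx hy
    calc ‖sip A (T x) y‖ = ‖(⟪B y, B (T x)⟫_ℂ)‖ := by
          rw [hsipBB]
      _ ≤ ‖B y‖ * ‖B (T x)‖ := norm_inner_le_norm _ _
      _ = ‖B (T x)‖ := by rw [hy, one_mul]
      _ ≤ Real.sqrt ‖R‖ := hTbound x hx
  -- the key construction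
  have hcons : ∀ x : H, ‖B x‖ = 1 →
      ‖q‖ * ‖sip A (T x) x‖ ≤ sSup Wset := by
    intro x hx
    obtain ⟨z, hz1, hz2⟩ := horth x
    set c : ℂ := sip A (T x) x with hcdef
    set d : ℂ := sip A (T x) z with hddef
    set s : ℂ := q * c with hsdef
    set θ' : ℂ := if s = 0 then 1 else s / (‖s‖ : ℂ) with hθ'
    have hθ'abs : ‖θ'‖ = 1 := by
      rw [hθ']
      split_ifs with h
      · simp
      · rw [norm_div, Complex.norm_real, Real.norm_eq_abs, abs_of_nonneg (norm_nonneg s),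
          div_self (norm_ne_zero_iff.mpr h)]
    have hθ's : θ' * (‖s‖ : ℂ) = s := by
      rw [hθ']
      split_ifs with h
      · simp [h]
      · have hne : (‖s‖ : ℂ) ≠ 0 :=
          Complex.ofReal_ne_zero.mpr (norm_ne_zero_iff.mpr h)
        field_simp
    set θ : ℂ := conj (θ' * (if d = 0 then 1 else (‖d‖ : ℂ) / d)) with hθdef
    have hθd : conj θ * d = θ' * (‖d‖ : ℂ) := by
      rw [hθdef, Complex.conj_conj]
      split_ifs with h
      · simp [h]
      · field_simp
    have hθabs : ‖θ‖ = 1 := by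
      rw [hθdef, Complex.norm_conj, norm_mul, hθ'abs, one_mul]
      split_ifs with h
      · simp
      · rw [norm_div, Complex.norm_real, Real.norm_eq_abs, abs_of_nonneg (norm_nonneg d),
          div_self (norm_ne_zero_iff.mpr h)]
    set β : ℝ := Real.sqrt (1 - ‖q‖^2) with hβdef
    have hβ0 : 0 ≤ β := Real.sqrt_nonneg _
    have hβsq : β^2 = 1 - ‖q‖^2 :=
      Real.sq_sqrt (by nlinarith [norm_nonneg q])
    set y : H := (conj q) • x + ((β : ℂ) * θ) • z with hydef
    have hzx : ⟪z, A x⟫_ℂ = 0 := by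
      have h5 : ⟪A z, x⟫_ℂ = 0 := by rw [← inner_conj_symm, hz2, map_zero]
      rw [hAapp, hmove] at h5
      rw [hAapp, ← hmove]
      exact h5
    have hxx : ⟪x, A x⟫_ℂ = 1 := by
      rw [hAapp, ← hmove, inner_self_eq_norm_sq_to_K, hx]
      norm_num
    have hsipxy : sip A x y = q := by
      show (⟪y, A x⟫_ℂ) = q
      rw [hydef, inner_add_left, inner_smul_left, inner_smul_left, hxx, hzx]
      simp
    have hBxz : ⟪B x, B z⟫_ℂ = 0 := by
      rw [hmove, ← hAapp]; exact hz2
    have hBy : B y = (conj q) • B x + ((β : ℂ) * θ) • B z := by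
      rw [hydef, map_add, map_smul, map_smul]
    have hny : ‖B y‖ = 1 := by
      have hcross : ⟪(conj q) • B x, ((β : ℂ) * θ) • B z⟫_ℂ = 0 := by
        rw [inner_smul_left, inner_smul_right, hBxz, mul_zero, mul_zero]
      have e1 : ‖(conj q) • B x‖ = ‖q‖ := by
        rw [norm_smul, hx, mul_one]
        simp [Complex.norm_conj]
      have e2 : ‖((β : ℂ) * θ) • B z‖ = β := by
        rw [norm_smul, hz1, mul_one]
        simp [norm_mul, Complex.norm_real, hθabs,
          abs_of_nonneg hβ0]
      have h6 : ‖B y‖^2 = 1 := by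
        rw [hBy, norm_add_sq_complex, hcross, e1, e2]
        simp only [Complex.zero_re, mul_zero, add_zero]
        linarith [hβsq]
      rw [← Real.sqrt_sq (norm_nonneg (B y)), h6, Real.sqrt_one]
    have hval : conj (conj q) * c + conj ((β:ℂ) * θ) * d
        = θ' * (((‖s‖ + β * ‖d‖ : ℝ)) : ℂ) := by
      calc conj (conj q) * c + conj ((β:ℂ) * θ) * d
          = q * c + (β:ℂ) * (conj θ * d) := by
            rw [Complex.conj_conj, map_mul, Complex.conj_ofReal]; ring
        _ = s + (β:ℂ) * (θ' * (‖d‖ : ℂ)) := by rw [hθd, ← hsdef]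
        _ = θ' * (‖s‖ : ℂ) + (β:ℂ) * (θ' * (‖d‖ : ℂ)) := by
            rw [hθ's]
        _ = θ' * (((‖s‖ + β * ‖d‖ : ℝ)) : ℂ) := by
            push_cast; ring
    have hsipTy : sip A (T x) y = θ' * (((‖s‖ + β * ‖d‖ : ℝ)) : ℂ) := by
      have hexp : sip A (T x) y = conj (conj q) * c + conj ((β:ℂ) * θ) * d := by
        show (⟪y, A (T x)⟫_ℂ) = _
        rw [hydef, inner_add_left, inner_smul_left, inner_smul_left]
        rfl
      rw [hexp, hval]
    have habs : ‖sip A (T x) y‖ = ‖s‖ + β * ‖d‖ := by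
      rw [hsipTy, norm_mul, hθ'abs, one_mul, Complex.norm_real, Real.norm_eq_abs]
      exact abs_of_nonneg (by positivity)
    have hmem : ‖sip A (T x) y‖ ∈ Wset := by
      refine ⟨x, y, ?_, ?_, hsipxy, rfl⟩
      · rw [hnormB]; exact hx
      · rw [hnormB]; exact hny
    have hfinal : ‖q‖ * ‖c‖ ≤ ‖sip A (T x) y‖ := by
      rw [habs, ← norm_mul, ← hsdef]
      nlinarith [mul_nonneg hβ0 (norm_nonneg d)]
    exact le_trans hfinal (le_csSup hbddW hmem)
  obtain ⟨x₀, hx₀, -⟩ := horth 0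
  have hW0 : 0 ≤ sSup Wset :=
    le_trans (mul_nonneg (norm_nonneg q) (norm_nonneg _)) (hcons x₀ hx₀)
  have hqpos : 0 < ‖q‖ := norm_pos_iff.mpr hq0
  set w : ℝ := sSup Wset / ‖q‖ with hwdef
  have hw0 : 0 ≤ w := div_nonneg hW0 hqpos.le
  have hnum1 : ∀ x : H, ‖B x‖ = 1 → ‖⟪B x, B (T x)⟫_ℂ‖ ≤ w := by
    intro x hx
    have h1 := hcons x hx
    have h2 : sip A (T x) x = ⟪B x, B (T x)⟫_ℂ := hsipBB (T x) x
    rw [h2] at h1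
    rw [hwdef, le_div_iff₀ hqpos, mul_comm]
    exact h1
  have hnum : ∀ z : H, ‖⟪B z, B (T z)⟫_ℂ‖ ≤ w * ‖B z‖^2 := by
    intro z
    rcases eq_or_ne ‖B z‖ 0 with h|h
    · have hcs : ‖⟪B z, B (T z)⟫_ℂ‖ ≤ ‖B z‖ * ‖B (T z)‖ := by
        exact norm_inner_le_norm _ _
      rw [h, zero_mul] at hcs
      rw [h]
      simpa using hcs
    · have ht : 0 < ‖B z‖ := lt_of_le_of_ne (norm_nonneg _) (Ne.symm h)
      set t := ‖B z‖ with htdef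
      have hne : t ≠ 0 := ne_of_gt ht
      have hz₀ : ‖B (((t⁻¹ : ℝ) : ℂ) • z)‖ = 1 := by
        rw [map_smul, norm_smul, Complex.norm_real, Real.norm_eq_abs,
          abs_of_pos (inv_pos.mpr ht)]
        exact inv_mul_cancel₀ hne
      have h1 := hnum1 _ hz₀
      have h2 : ⟪B (((t⁻¹:ℝ):ℂ) • z), B (T (((t⁻¹:ℝ):ℂ) • z))⟫_ℂ
          = ((t⁻¹:ℝ):ℂ) * ((t⁻¹:ℝ):ℂ) * ⟪B z, B (T z)⟫_ℂ := by
        rw [map_smul, map_smul, map_smul, inner_smul_left, inner_smul_right,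
          Complex.conj_ofReal]
        ring
      rw [h2, norm_mul, norm_mul, Complex.norm_real, Real.norm_eq_abs,
        abs_of_pos (inv_pos.mpr ht)] at h1
      calc ‖⟪B z, B (T z)⟫_ℂ‖
          = t^2 * (t⁻¹ * t⁻¹ * ‖⟪B z, B (T z)⟫_ℂ‖) := by
            field_simp
        _ ≤ t^2 * w := mul_le_mul_of_nonneg_left h1 (by positivity)
        _ = w * t^2 := mul_comm _ _
  -- Cartesian decomposition
  set Pop : H →L[ℂ] H := T + S with hPdef
  set Qop : H →L[ℂ] H := Complex.I • (S - T) with hQdef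
  have hPapp : ∀ z : H, Pop z = T z + S z := fun _ => rfl
  have hQapp : ∀ z : H, Qop z = Complex.I • (S z - T z) := fun _ => rfl
  have hPsym : ∀ v u : H, ⟪B v, B (Pop u)⟫_ℂ = ⟪B (Pop v), B u⟫_ℂ := by
    intro v u
    rw [hPapp u, hPapp v, map_add, map_add, inner_add_right, inner_add_left,
      hi v u, hii v u]
    ring
  have hQsym : ∀ v u : H, ⟪B v, B (Qop u)⟫_ℂ = ⟪B (Qop v), B u⟫_ℂ := by
    intro v u
    rw [hQapp u, hQapp v, map_smul, map_smul, inner_smul_right, inner_smul_left,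
      Complex.conj_I, map_sub, map_sub, inner_sub_right, inner_sub_left,
      hi v u, hii v u]
    ring
  have hPnum : ∀ z : H, |(⟪B z, B (Pop z)⟫_ℂ).re| ≤ (2*w) * ‖B z‖^2 := by
    intro z
    have hconj : (⟪B (T z), B z⟫_ℂ) = conj (⟪B z, B (T z)⟫_ℂ) :=
      (inner_conj_symm _ _).symm
    have h1 : ⟪B z, B (Pop z)⟫_ℂ = ⟪B z, B (T z)⟫_ℂ + conj (⟪B z, B (T z)⟫_ℂ) := by
      rw [hPapp, map_add, inner_add_right, hi z z, hconj]
    have h2 : (⟪B z, B (T z)⟫_ℂ + conj (⟪B z, B (T z)⟫_ℂ)).re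
        = 2 * (⟪B z, B (T z)⟫_ℂ).re := by
      rw [Complex.add_re, Complex.conj_re]; ring
    rw [h1, h2, abs_mul, abs_two]
    nlinarith [Complex.abs_re_le_norm (⟪B z, B (T z)⟫_ℂ), hnum z,
      abs_nonneg (⟪B z, B (T z)⟫_ℂ).re]
  have hQnum : ∀ z : H, |(⟪B z, B (Qop z)⟫_ℂ).re| ≤ (2*w) * ‖B z‖^2 := by
    intro z
    have hconj : (⟪B (T z), B z⟫_ℂ) = conj (⟪B z, B (T z)⟫_ℂ) :=
      (inner_conj_symm _ _).symm
    have h1 : ⟪B z, B (Qop z)⟫_ℂ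
        = Complex.I * (conj (⟪B z, B (T z)⟫_ℂ) - ⟪B z, B (T z)⟫_ℂ) := by
      rw [hQapp, map_smul, inner_smul_right, map_sub, inner_sub_right, hi z z, hconj]
    have h2 : (Complex.I * (conj (⟪B z, B (T z)⟫_ℂ) - ⟪B z, B (T z)⟫_ℂ)).re
        = 2 * (⟪B z, B (T z)⟫_ℂ).im := by
      rw [Complex.mul_re, Complex.I_re, Complex.I_im, Complex.sub_re, Complex.sub_im,
        Complex.conj_re, Complex.conj_im]
      ring
    rw [h1, h2, abs_mul, abs_two]
    nlinarith [Complex.abs_im_le_norm (⟪B z, B (T z)⟫_ℂ), hnum z,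
      abs_nonneg (⟪B z, B (T z)⟫_ℂ).im]
  have hPbd := aux_polar B Pop (2*w) (by linarith [hw0]) hPsym hPnum
  have hQbd := aux_polar B Qop (2*w) (by linarith [hw0]) hQsym hQnum
  have hop : ∀ u : H, S (T u) + T (S u) = ((2:ℂ)⁻¹) • (Pop (Pop u) + Qop (Qop u)) := by
    intro u
    simp only [hPapp, hQapp, map_add, map_smul, map_sub, smul_add, smul_sub,
      smul_smul, Complex.I_mul_I]
    module
  have hfin : ∀ u : H, ‖B (S (T u) + T (S u))‖ ≤ 4 * w^2 * ‖B u‖ := by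
    intro u
    rw [hop, map_smul, norm_smul]
    have h2 : ‖B (Pop (Pop u) + Qop (Qop u))‖ ≤ 8 * w^2 * ‖B u‖ := by
      rw [map_add]
      calc ‖B (Pop (Pop u)) + B (Qop (Qop u))‖
          ≤ ‖B (Pop (Pop u))‖ + ‖B (Qop (Qop u))‖ := norm_add_le _ _
        _ ≤ (2*w) * ‖B (Pop u)‖ + (2*w) * ‖B (Qop u)‖ := add_le_add (hPbd _) (hQbd _)
        _ ≤ (2*w) * ((2*w) * ‖B u‖) + (2*w) * ((2*w) * ‖B u‖) := by
            have hp := hPbd u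
            have hq' := hQbd u
            nlinarith [hw0, norm_nonneg (B u)]
        _ = 8 * w^2 * ‖B u‖ := by ring
    have h3 : ‖((2:ℂ)⁻¹)‖ = (2:ℝ)⁻¹ := by simp
    rw [h3]
    nlinarith [h2, norm_nonneg (B (Pop (Pop u) + Qop (Qop u)))]
  have hOp : opNormA A (R + T ∘L S) ≤ 4*w^2 := by
    unfold opNormA
    apply Real.sSup_le
    · rintro r ⟨x, hxcl, hx0, rfl⟩
      have happ : (R + T ∘L S) x = S (T x) + T (S x) := rfl
      rw [happ, hnormB, hnormB]
      rcases eq_or_ne ‖B x‖ 0 with h|h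
      · rw [h, div_zero]; positivity
      · rw [div_le_iff₀ (lt_of_le_of_ne (norm_nonneg _) (Ne.symm h))]
        exact hfin x
    · positivity
  calc ‖q‖ ^ 2 / 4 * opNormA A (R + T ∘L S)
      ≤ ‖q‖ ^ 2 / 4 * (4*w^2) :=
        mul_le_mul_of_nonneg_left hOp (by positivity)
    _ = (‖q‖ * w)^2 := by ring
    _ = (sSup Wset)^2 := by
        rw [hwdef]
        field_simp
    _ = (wqA A T q)^2 := by rw [hwqQ]
end

section
/- Let T ∈ B_A(H) and q a complex number with |q| ≤ 1. Then w_{q,A}(T) ≤ ( |q|²·w_A(T)² + (1−|q|²)·‖T‖_A² + 2|q|√(1−|q|²)·w_A(T)·‖T‖_A )^{1/2}, where w_A is the A-numerical radius (the case q = 1). -/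
open scoped InnerProductSpace

variable {H : Type*} [NormedAddCommGroup H] [InnerProductSpace ℂ H] [CompleteSpace H]

/-- The `A`-numerical radius `w_A(T) = sup {|⟨Tx,x⟩_A| : ‖x‖_A = 1}`. -/
noncomputable def wA (A T : H →L[ℂ] H) : ℝ :=
  sSup {r : ℝ | ∃ x : H, normA A x = 1 ∧ r = ‖sip A (T x) x‖}

set_option maxHeartbeats 1000000
set_option synthInstance.maxHeartbeats 1000000

lemma aux_iter {g : ℕ → ℝ} {m C : ℝ} (hgnn : ∀ k, 0 ≤ g k)
    (hchain : ∀ k, g k ^ 2 ≤ g (2 * k) * g 0)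
    (hmnn : 0 ≤ m) (hgrow : ∀ k, g k ≤ C * m ^ k) : g 1 ≤ m * g 0 := by
  by_cases h0 : g 0 = 0
  · have h1 : g 1 ^ 2 ≤ 0 := by
      have := hchain 1
      simpa [h0] using this
    have : g 1 = 0 := le_antisymm (by nlinarith [hgnn 1]) (hgnn 1)
    simp [this, h0]
  · have h0' : 0 < g 0 := (hgnn 0).lt_of_ne (Ne.symm h0)
    by_contra hlt
    push_neg at hlt
    have hm : 0 < m := by
      rcases hmnn.lt_or_eq with h | h
      · exact h
      · exfalso
        have := hgrow 1
        rw [← h] at this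
        simp at this
        nlinarith [hgnn 1]
    have hC : 0 < C := by
      have := hgrow 0
      simp at this
      linarith
    set r := g 1 / (m * g 0) with hrdef
    have hr : 1 < r := (one_lt_div (by positivity)).mpr hlt
    have key : ∀ n, g 1 ^ (2^n) * g 0 ≤ g 0 ^ (2^n) * g (2^n) := by
      intro n
      induction n with
      | zero => simp [mul_comm]
      | succ n ih =>
        have e : ∀ a : ℝ, a ^ (2^(n+1)) = (a ^ (2^n))^2 := fun a => by
          rw [← pow_mul, pow_succ]
        have hc := hchain (2^n)
        have h2 : 2 * 2^n = 2^(n+1) := by rw [pow_succ]; ring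
        rw [h2] at hc
        have h1 : (g 1 ^ (2^n) * g 0)^2 ≤ (g 0 ^ (2^n) * g (2^n))^2 :=
          pow_le_pow_left₀ (mul_nonneg (pow_nonneg (hgnn 1) _) (hgnn 0)) ih 2
        have hmain : g 1 ^ (2^(n+1)) * g 0 * g 0 ≤ g 0 ^ (2^(n+1)) * g (2^(n+1)) * g 0 := by
          rw [e, e]
          nlinarith [hgnn (2^n), hgnn (2^(n+1)), pow_nonneg (hgnn 0) (2^n), sq_nonneg (g 0 ^ (2^n))]
        exact le_of_mul_le_mul_right hmain h0'
    have bound : ∀ n, r ^ (2^n) ≤ C / g 0 := by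
      intro n
      have k2 := hgrow (2^n)
      have k3 : g 1 ^ (2^n) * g 0 ≤ g 0 ^ (2^n) * (C * m ^ (2^n)) := by
        calc g 1 ^ (2^n) * g 0 ≤ g 0 ^ (2^n) * g (2^n) := key n
        _ ≤ g 0 ^ (2^n) * (C * m ^ (2^n)) := by
            apply mul_le_mul_of_nonneg_left k2 (by positivity)
      rw [hrdef, div_pow, div_le_div_iff₀ (by positivity) h0', mul_pow]
      calc g 1 ^ (2^n) * g 0 ≤ g 0 ^ (2^n) * (C * m ^ (2^n)) := k3
        _ = C * (m ^ (2^n) * g 0 ^ (2^n)) := by ring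
    obtain ⟨n, hn⟩ := pow_unbounded_of_one_lt (C / g 0) hr
    have h5 : r ^ n ≤ r ^ (2^n) := pow_le_pow_right₀ hr.le (Nat.le_of_lt (Nat.lt_two_pow_self (n := n)))
    exact lt_irrefl _ (lt_of_lt_of_le hn (h5.trans (bound n)))


theorem stmt5 (A T : H →L[ℂ] H) (hA : A.IsPositive)
    (hrank : 2 ≤ Module.rank ℂ (LinearMap.range (A : H →ₗ[ℂ] H)))
    (hadj : ∃ S : H →L[ℂ] H, ∀ x y : H, sip A (T x) y = sip A x (S y))
    (q : ℂ) (hq : ‖q‖ ≤ 1) :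
    wqA A T q ≤
      Real.sqrt (‖q‖ ^ 2 * (wA A T) ^ 2 + (1 - ‖q‖ ^ 2) * (opNormA A T) ^ 2 +
        2 * ‖q‖ * Real.sqrt (1 - ‖q‖ ^ 2) * wA A T * opNormA A T) := by
  obtain ⟨S, hS⟩ := hadj
  have hA0 : (0:H→L[ℂ]H) ≤ A := (ContinuousLinearMap.nonneg_iff_isPositive A).mpr hA
  set R := CFC.sqrt A with hRdef
  have hR2 : R * R = A := CFC.sqrt_mul_sqrt_self A hA0
  have hRsa : ContinuousLinearMap.adjoint R = R := IsSelfAdjoint.of_nonneg (CFC.sqrt_nonneg A)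
  have hsip : ∀ x y : H, sip A x y = ⟪R y, R x⟫_ℂ := by
    intro x y
    rw [sip, ← hR2, ContinuousLinearMap.mul_apply, ← ContinuousLinearMap.adjoint_inner_left, hRsa]
  have hnorm : ∀ x : H, normA A x = ‖R x‖ := by
    intro x
    have h : (⟪R x, R x⟫_ℂ).re = ‖R x‖^2 := by
      rw [inner_self_eq_norm_sq_to_K]; norm_cast
    rw [normA, hsip, h, Real.sqrt_sq (norm_nonneg _)]
  have hS' : ∀ x y : H, ⟪R y, R (T x)⟫_ℂ = ⟪R (S y), R x⟫_ℂ := by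
    intro x y; have := hS x y; rwa [hsip, hsip] at this
  have hST : ∀ x y : H, ⟪R y, R (S x)⟫_ℂ = ⟪R (T y), R x⟫_ℂ := by
    intro x y
    calc ⟪R y, R (S x)⟫_ℂ = (starRingEnd ℂ) ⟪R (S x), R y⟫_ℂ := (inner_conj_symm _ _).symm
      _ = (starRingEnd ℂ) ⟪R x, R (T y)⟫_ℂ := by rw [← hS' y x]
      _ = ⟪R (T y), R x⟫_ℂ := inner_conj_symm _ _
  set M := S ∘L T with hMdef
  have hMapp : ∀ x : H, M x = S (T x) := fun x => rfl
  have hM : ∀ x y : H, ⟪R y, R (M x)⟫_ℂ = ⟪R (M y), R x⟫_ℂ := by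
    intro x y
    calc ⟪R y, R (M x)⟫_ℂ = ⟪R (T y), R (T x)⟫_ℂ := hST (T x) y
      _ = (starRingEnd ℂ) ⟪R (T x), R (T y)⟫_ℂ := (inner_conj_symm _ _).symm
      _ = (starRingEnd ℂ) ⟪R x, R (S (T y))⟫_ℂ := by rw [← hST (T y) x]
      _ = ⟪R (M y), R x⟫_ℂ := inner_conj_symm _ _
  have hMw : ∀ (n:ℕ) (x y : H), ⟪R y, R ((M^n) x)⟫_ℂ = ⟪R ((M^n) y), R x⟫_ℂ := by
    intro n
    induction n with
    | zero => intro x y; simp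
    | succ n ih =>
      intro x y
      have h1 : (M^(n+1)) x = (M^n) (M x) := by
        rw [pow_succ]; exact ContinuousLinearMap.mul_apply _ _ _
      have h2 : M ((M^n) y) = (M^(n+1)) y := by
        rw [pow_succ']; exact (ContinuousLinearMap.mul_apply _ _ _).symm
      rw [h1, ih (M x) y, hM x ((M^n) y), h2]
  -- growth of iterates
  have hpowapp : ∀ (k:ℕ) (x : H), ‖(M^k) x‖ ≤ ‖M‖^k * ‖x‖ := by
    intro k
    induction k with
    | zero => intro x; simp
    | succ k ih =>
      intro x
      have h1 : (M^(k+1)) x = M ((M^k) x) := by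
        rw [pow_succ']; exact ContinuousLinearMap.mul_apply _ _ _
      calc ‖(M^(k+1)) x‖ = ‖M ((M^k) x)‖ := by rw [h1]
        _ ≤ ‖M‖ * ‖(M^k) x‖ := M.le_opNorm _
        _ ≤ ‖M‖ * (‖M‖^k * ‖x‖) := by
            exact mul_le_mul_of_nonneg_left (ih x) (norm_nonneg M)
        _ = ‖M‖^(k+1) * ‖x‖ := by ring
  have hnormsq : ∀ u : H, ‖u‖^2 = (⟪u, u⟫_ℂ).re := by
    intro u
    rw [inner_self_eq_norm_sq_to_K]; norm_cast
  have hMbound : ∀ x : H, ‖R (M x)‖ ≤ ‖M‖ * ‖R x‖ := by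
    intro x
    have hgnn : ∀ k, 0 ≤ (fun k => ‖R ((M^k) x)‖) k := fun k => norm_nonneg _
    have hchain : ∀ k, ‖R ((M^k) x)‖ ^ 2 ≤ ‖R ((M^(2*k)) x)‖ * ‖R x‖ := by
      intro k
      have h1 : ⟪R ((M^k) x), R ((M^k) x)⟫_ℂ = ⟪R ((M^(2*k)) x), R x⟫_ℂ := by
        rw [hMw k x ((M^k) x)]
        congr 2
        rw [two_mul, pow_add]
        exact (ContinuousLinearMap.mul_apply _ _ _).symm
      calc ‖R ((M^k) x)‖ ^ 2 = (⟪R ((M^k) x), R ((M^k) x)⟫_ℂ).re := hnormsq _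
        _ = (⟪R ((M^(2*k)) x), R x⟫_ℂ).re := by rw [h1]
        _ ≤ ‖R ((M^(2*k)) x)‖ * ‖R x‖ := by simpa using re_inner_le_norm (𝕜 := ℂ) (R ((M^(2*k)) x)) (R x)
    have hgrow : ∀ k, ‖R ((M^k) x)‖ ≤ (‖R‖ * ‖x‖) * ‖M‖^k := by
      intro k
      calc ‖R ((M^k) x)‖ ≤ ‖R‖ * ‖(M^k) x‖ := R.le_opNorm _
        _ ≤ ‖R‖ * (‖M‖^k * ‖x‖) := mul_le_mul_of_nonneg_left (hpowapp k x) (norm_nonneg R)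
        _ = (‖R‖ * ‖x‖) * ‖M‖^k := by ring
    have := aux_iter (g := fun k => ‖R ((M^k) x)‖) (m := ‖M‖) (C := ‖R‖ * ‖x‖)
      hgnn (fun k => hchain k) (norm_nonneg M) hgrow
    simpa using this
  set K := Real.sqrt ‖M‖ with hKdef
  have hTle : ∀ x : H, ‖R (T x)‖ ≤ K * ‖R x‖ := by
    intro x
    have h1 : ‖R (T x)‖^2 ≤ ‖R (M x)‖ * ‖R x‖ := by
      calc ‖R (T x)‖^2 = (⟪R (T x), R (T x)⟫_ℂ).re := hnormsq _
        _ = (⟪R (M x), R x⟫_ℂ).re := by rw [hS' x (T x)]; rfl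
        _ ≤ ‖R (M x)‖ * ‖R x‖ := by simpa using re_inner_le_norm (𝕜 := ℂ) (R (M x)) (R x)
    have h2 : ‖R (T x)‖^2 ≤ ‖M‖ * ‖R x‖^2 := by
      calc ‖R (T x)‖^2 ≤ ‖R (M x)‖ * ‖R x‖ := h1
        _ ≤ (‖M‖ * ‖R x‖) * ‖R x‖ := mul_le_mul_of_nonneg_right (hMbound x) (norm_nonneg _)
        _ = ‖M‖ * ‖R x‖^2 := by ring
    have h3 : (K * ‖R x‖)^2 = ‖M‖ * ‖R x‖^2 := by
      rw [mul_pow, hKdef, Real.sq_sqrt (norm_nonneg M)]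
    calc ‖R (T x)‖ = Real.sqrt (‖R (T x)‖^2) := (Real.sqrt_sq (norm_nonneg _)).symm
      _ ≤ Real.sqrt ((K * ‖R x‖)^2) := Real.sqrt_le_sqrt (by rw [h3]; exact h2)
      _ = K * ‖R x‖ := Real.sqrt_sq (by positivity)
  -- kernel facts
  have hker : ∀ x : H, A x = 0 → R x = 0 := by
    intro x hx
    have h1 : ‖R x‖^2 = 0 := by
      rw [hnormsq, ← hsip, sip, hx, inner_zero_right]
      rfl
    have := pow_eq_zero_iff (n := 2) (by norm_num) |>.mp h1
    exact norm_eq_zero.mp this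
  have hAswap : ∀ u v : H, ⟪A u, v⟫_ℂ = ⟪u, A v⟫_ℂ := by
    intro u v
    have hadjA : ContinuousLinearMap.adjoint A = A := hA.isSelfAdjoint
    nth_rewrite 1 [← hadjA]
    rw [ContinuousLinearMap.adjoint_inner_left]
  have horv : ∀ z : H, z ∈ closure (Set.range fun v => A v) → R z = 0 → z = 0 := by
    intro z hz hRz
    have hAz : A z = 0 := by
      rw [← hR2, ContinuousLinearMap.mul_apply, hRz, map_zero]
    have hsub : closure (Set.range fun v => A v) ⊆ {u : H | ⟪u, z⟫_ℂ = 0} := by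
      apply closure_minimal
      · rintro _ ⟨v, rfl⟩
        simp only [Set.mem_setOf_eq]
        rw [hAswap, hAz, inner_zero_right]
      · exact isClosed_eq (by continuity) continuous_const
    have : ⟪z, z⟫_ℂ = 0 := hsub hz
    exact inner_self_eq_zero.mp this
  -- boundedness of the wA set
  have hwA_bdd : BddAbove {r : ℝ | ∃ x : H, normA A x = 1 ∧ r = ‖sip A (T x) x‖} := by
    refine ⟨K, ?_⟩
    rintro r ⟨x, hx1, rfl⟩
    rw [hnorm] at hx1
    calc ‖sip A (T x) x‖ = ‖⟪R x, R (T x)⟫_ℂ‖ := by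
          rw [hsip]
      _ ≤ ‖R x‖ * ‖R (T x)‖ := norm_inner_le_norm _ _
      _ ≤ ‖R x‖ * (K * ‖R x‖) := by
          exact mul_le_mul_of_nonneg_left (hTle x) (norm_nonneg _)
      _ = K := by rw [hx1]; ring
  have hwA_le : ∀ x : H, normA A x = 1 → ‖sip A (T x) x‖ ≤ wA A T :=
    fun x hx => le_csSup hwA_bdd ⟨x, hx, rfl⟩
  have hwA_nonneg : 0 ≤ wA A T := by
    apply Real.sSup_nonneg
    rintro r ⟨x, hx, rfl⟩
    exact norm_nonneg _
  -- boundedness of the opNormA set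
  have hO_bdd : BddAbove {r : ℝ | ∃ x ∈ closure (Set.range fun v => A v), x ≠ 0 ∧
      r = normA A (T x) / normA A x} := by
    refine ⟨K, ?_⟩
    rintro r ⟨z, hzV, hz0, rfl⟩
    have hRz : R z ≠ 0 := fun h => hz0 (horv z hzV h)
    have hRzpos : 0 < ‖R z‖ := norm_pos_iff.mpr hRz
    rw [hnorm, hnorm, div_le_iff₀ hRzpos]
    exact hTle z
  have hO_nonneg : 0 ≤ opNormA A T := by
    apply Real.sSup_nonneg
    rintro r ⟨z, hzV, hz0, rfl⟩
    exact div_nonneg (Real.sqrt_nonneg _) (Real.sqrt_nonneg _)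
  -- the key operator-seminorm bound
  set V : Submodule ℂ H := (LinearMap.range (A : H →ₗ[ℂ] H)).topologicalClosure with hVdef
  have hVset : (V : Set H) = closure (Set.range fun v => A v) := by
    rw [hVdef, Submodule.topologicalClosure_coe]
    congr 1
  have hTop : ∀ x : H, normA A x = 1 → normA A (T x) ≤ opNormA A T := by
    intro x hx
    have : CompleteSpace V := (Submodule.isClosed_topologicalClosure _).completeSpace_coe
    set z : H := (V.orthogonalProjectionOnto x : H) with hzdef
    have hzV : z ∈ closure (Set.range fun v => A v) := by
      rw [← hVset]
      exact (V.orthogonalProjectionOnto x).2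
    have hwmem : x - z ∈ Vᗮ := V.sub_starProjection_mem_orthogonal x
    have hAw : A (x - z) = 0 := by
      have h1 : ∀ u : H, ⟪u, A (x - z)⟫_ℂ = 0 := by
        intro u
        rw [← hAswap]
        apply (Submodule.mem_orthogonal V (x - z)).mp hwmem
        rw [hVdef]
        exact Submodule.le_topologicalClosure _ (LinearMap.mem_range_self _ u)
      have := h1 (A (x - z))
      exact inner_self_eq_zero.mp this
    have hRw : R (x - z) = 0 := hker _ hAw
    have hRTw : R (T (x - z)) = 0 := by
      have h1 : ‖R (T (x - z))‖^2 = 0 := by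
        rw [hnormsq, hS' (x - z) (T (x - z)), hRw, inner_zero_right]
        rfl
      exact norm_eq_zero.mp (pow_eq_zero_iff (n := 2) (by norm_num) |>.mp h1)
    have hRx : R x = R z := by
      have := hRw
      rw [map_sub] at this
      exact sub_eq_zero.mp this
    have hRTx : R (T x) = R (T z) := by
      have := hRTw
      rw [map_sub, map_sub] at this
      exact sub_eq_zero.mp this
    have hz1 : normA A z = 1 := by
      rw [hnorm, ← hRx, ← hnorm]
      exact hx
    have hz0 : z ≠ 0 := by
      intro h
      rw [h, hnorm, map_zero, norm_zero] at hz1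
      exact one_ne_zero hz1.symm
    have hmem : normA A (T z) / normA A z ∈ {r : ℝ | ∃ x ∈ closure (Set.range fun v => A v),
        x ≠ 0 ∧ r = normA A (T x) / normA A x} := ⟨z, hzV, hz0, rfl⟩
    have hle := le_csSup hO_bdd hmem
    rw [hz1, div_one] at hle
    calc normA A (T x) = normA A (T z) := by rw [hnorm, hnorm, hRTx]
      _ ≤ opNormA A T := hle
  -- main estimate
  have hq2 : ‖q‖ ^ 2 ≤ 1 := by
    nlinarith [norm_nonneg q]
  have hq2' : (0:ℝ) ≤ 1 - ‖q‖ ^ 2 := by linarith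
  set s := Real.sqrt (1 - ‖q‖ ^ 2) with hsdef
  have hs2 : s ^ 2 = 1 - ‖q‖ ^ 2 := Real.sq_sqrt hq2'
  set a : ℝ := ‖q‖ * wA A T + s * opNormA A T with hadef
  have ha_nonneg : 0 ≤ a := by
    have := norm_nonneg q
    have := Real.sqrt_nonneg (1 - ‖q‖ ^ 2)
    positivity
  have hrhs : Real.sqrt (‖q‖ ^ 2 * (wA A T) ^ 2 +
      (1 - ‖q‖ ^ 2) * (opNormA A T) ^ 2 +
      2 * ‖q‖ * s * wA A T * opNormA A T) = a := by
    have h1 : ‖q‖ ^ 2 * (wA A T) ^ 2 + (1 - ‖q‖ ^ 2) * (opNormA A T) ^ 2 +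
        2 * ‖q‖ * s * wA A T * opNormA A T = a ^ 2 := by
      rw [hadef]
      linear_combination (opNormA A T ^ 2) * hs2.symm
    rw [h1, Real.sqrt_sq ha_nonneg]
  rw [hrhs]
  apply Real.sSup_le
  · rintro r ⟨x, y, hx1, hy1, hxy, rfl⟩
    -- the element bound
    have hRx1 : ‖R x‖ = 1 := by rw [← hnorm]; exact hx1
    have hRy1 : ‖R y‖ = 1 := by rw [← hnorm]; exact hy1
    have hqi : ⟪R y, R x⟫_ℂ = q := by rw [← hsip]; exact hxy
    have hqi' : ⟪R x, R y⟫_ℂ = (starRingEnd ℂ) q := by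
      rw [← inner_conj_symm, hqi]
    set c : ℂ := (starRingEnd ℂ) q with hcdef
    set z : H := y - c • x with hzdef
    have hRz : R z = R y - c • R x := by rw [hzdef, map_sub, map_smul]
    have hxxi : ⟪R x, R x⟫_ℂ = 1 := by
      rw [inner_self_eq_norm_sq_to_K, hRx1]; norm_num
    have hyyi : ⟪R y, R y⟫_ℂ = 1 := by
      rw [inner_self_eq_norm_sq_to_K, hRy1]; norm_num
    have hzn : ‖R z‖ = s := by
      have hinner : ⟪R z, R z⟫_ℂ = ((1 - ‖q‖ ^ 2 : ℝ) : ℂ) := by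
        rw [hRz]
        simp only [inner_sub_left, inner_sub_right, inner_smul_left, inner_smul_right,
          hxxi, hyyi, hqi, hqi', hcdef, Complex.conj_conj]
        have habs : ((‖q‖ : ℝ) : ℂ)^2 = q * (starRingEnd ℂ) q := by
          rw [← Complex.ofReal_pow, Complex.sq_norm, Complex.mul_conj]
        rw [Complex.ofReal_sub, Complex.ofReal_one, Complex.ofReal_pow, habs]
        ring
      have h2 : ‖R z‖^2 = 1 - ‖q‖ ^ 2 := by
        rw [hnormsq, hinner, Complex.ofReal_re]
      rw [hsdef, ← h2, Real.sqrt_sq (norm_nonneg _)]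
    have hdec : sip A (T x) y = sip A (T x) z + q * sip A (T x) x := by
      rw [hsip, hsip, hsip, hRz, inner_sub_left, inner_smul_left]
      rw [hcdef, Complex.conj_conj]
      ring
    have hb1 : ‖sip A (T x) z‖ ≤ s * opNormA A T := by
      rw [hsip]
      calc ‖⟪R z, R (T x)⟫_ℂ‖ = ‖⟪R z, R (T x)⟫_ℂ‖ := rfl
        _ ≤ ‖R z‖ * ‖R (T x)‖ := norm_inner_le_norm _ _
        _ ≤ s * opNormA A T := by
            rw [hzn]
            apply mul_le_mul_of_nonneg_left _ (Real.sqrt_nonneg _)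
            rw [← hnorm]
            exact hTop x hx1
    have hb2 : ‖q * sip A (T x) x‖ ≤ ‖q‖ * wA A T := by
      rw [norm_mul]
      exact mul_le_mul_of_nonneg_left (hwA_le x hx1) (norm_nonneg _)
    calc ‖sip A (T x) y‖
        = ‖sip A (T x) z + q * sip A (T x) x‖ := by rw [hdec]
      _ ≤ ‖sip A (T x) z‖ + ‖q * sip A (T x) x‖ :=
          norm_add_le _ _
      _ ≤ s * opNormA A T + ‖q‖ * wA A T := add_le_add hb1 hb2
      _ = a := by rw [hadef]; ring
  · exact ha_nonneg
end
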